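/- arXiv:1812.02099 — 2 statements merged into one kernel-verified Lean document; each statement's English description precedes it below -/
import Mathlib

section
/- Let C be an ample concept class and t ⊆ X a set with t ∉ C such that C' := C ∪ {t} is isometric. Then C' is ample and t is a corner of C'. -/
variable {X : Type} [Fintype X] [DecidableEq X]

/-- Hamming distance between two subsets of `X` (size of symmetric difference). -/
def hdist (c c' : Finset X) : ℕ := ((c \ c') ∪ (c' \ c)).card

/-- The restriction `C|Y = {c ∩ Y : c ∈ C}`. -/
def restrictTo (C : Finset (Finset X)) (Y : Finset X) : Finset (Finset X) :=
  C.image (· ∩ Y)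

/-- `Y` is shattered by `C`, i.e. `C|Y = 2^Y`. -/
def Shatters (C : Finset (Finset X)) (Y : Finset X) : Prop :=
  ∀ s ∈ Y.powerset, ∃ c ∈ C, c ∩ Y = s

instance (C : Finset (Finset X)) : DecidablePred (Shatters C) := fun _ => by
  unfold Shatters; infer_instance

/-- The family `X̄(C)` of all sets shattered by `C`. -/
def shatteredSets (C : Finset (Finset X)) : Finset (Finset X) :=
  Finset.univ.filter (Shatters C)

/-- The VC dimension of `C`: maximum size of a shattered set. -/
def vcDim (C : Finset (Finset X)) : ℕ := (shatteredSets C).sup Finset.card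

/-- `C` is ample: `|C| = |X̄(C)|`. -/
def IsAmple (C : Finset (Finset X)) : Prop := C.card = (shatteredSets C).card

/-- `C` is a maximum class of VC dimension `d`. -/
def IsMaximumClass (C : Finset (Finset X)) (d : ℕ) : Prop :=
  vcDim C = d ∧ C.card = ∑ i ∈ Finset.range (d + 1), (Fintype.card X).choose i

/-- `B` is a cube with support `Y`: `B = {t ∪ s : s ⊆ Y}` for some `t ⊆ X \ Y`. -/
def IsCubeS (B : Finset (Finset X)) (Y : Finset X) : Prop :=
  ∃ t : Finset X, t ∩ Y = ∅ ∧ B = Y.powerset.image (fun s => t ∪ s)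

/-- `B` is a cube. -/
def IsCube (B : Finset (Finset X)) : Prop := ∃ Y, IsCubeS B Y

/-- `B` is a cube of `C`: a cube contained in `C`. -/
def IsCubeOf (C B : Finset (Finset X)) : Prop := B ⊆ C ∧ IsCube B

/-- `B` is a maximal cube of `C` (maximal under inclusion among cubes of `C`). -/
def IsMaximalCubeOf (C B : Finset (Finset X)) : Prop :=
  IsCubeOf C B ∧ ∀ B', IsCubeOf C B' → B ⊆ B' → B = B'

/-- `c` is a corner of `C`: a concept of `C` belonging to a unique maximal cube of `C`. -/
def IsCornerOf (C : Finset (Finset X)) (c : Finset X) : Prop :=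
  c ∈ C ∧ ∃! B, IsMaximalCubeOf C B ∧ c ∈ B

/-- The one-inclusion graph `G(C)`. -/
def oneInclusionGraph (C : Finset (Finset X)) : SimpleGraph {c : Finset X // c ∈ C} where
  Adj c c' := hdist c.1 c'.1 = 1
  symm := by
    constructor
    intro a b h
    simpa [hdist, Finset.union_comm] using h
  loopless := by
    constructor
    intro a h
    simp [hdist] at h

/-- `C` is isometric: `G(C)` is connected and graph distances equal Hamming distances. -/
def IsIsometric (C : Finset (Finset X)) : Prop :=
  (oneInclusionGraph C).Connected ∧
  ∀ c c' : {c : Finset X // c ∈ C}, (oneInclusionGraph C).dist c c' = hdist c.1 c'.1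

/-- `C` is weakly isometric: `G(C)` is connected and graph distances equal Hamming
distances for pairs at Hamming distance at most 2. -/
def IsWeaklyIsometric (C : Finset (Finset X)) : Prop :=
  (oneInclusionGraph C).Connected ∧
  ∀ c c' : {c : Finset X // c ∈ C}, hdist c.1 c'.1 ≤ 2 →
    (oneInclusionGraph C).dist c c' = hdist c.1 c'.1

/-- A list of concepts is a corner peeling if it has no duplicates and each element is a
corner of the corresponding level set. -/
def IsCornerPeeling (l : List (Finset X)) : Prop :=
  l.Nodup ∧ ∀ i (h : i < l.length), IsCornerOf ((l.take (i + 1)).toFinset) (l.get ⟨i, h⟩)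

/-- `C` is dismantlable: it admits a corner peeling ordering of all its concepts. -/
def Dismantlable (C : Finset (Finset X)) : Prop :=
  ∃ l : List (Finset X), l.toFinset = C ∧ IsCornerPeeling l

/-- Non-clashing condition for a map `r`. -/
def NonClashing (C : Finset (Finset X)) (r : Finset X → Finset X) : Prop :=
  ∀ c ∈ C, ∀ c' ∈ C, c ≠ c' → c ∩ (r c ∪ r c') ≠ c' ∩ (r c ∪ r c')

/-- `r` is a representation map for `C`: a non-clashing bijection from `C` onto `X̄(C)`. -/
def IsRepMap (C : Finset (Finset X)) (r : Finset X → Finset X) : Prop :=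
  (∀ c ∈ C, r c ∈ shatteredSets C) ∧
  Set.InjOn r ↑C ∧
  (∀ Y ∈ shatteredSets C, ∃ c ∈ C, r c = Y) ∧
  NonClashing C r

/-- `C` admits an unlabeled sample compression scheme of size `k`. -/
def HasUSCS (C : Finset (Finset X)) (k : ℕ) : Prop :=
  ∃ (α : Finset X → Finset X → Finset X) (β : Finset X → Finset X),
    ∀ (Y : Finset X), ∀ c ∈ C,
      α Y (c ∩ Y) ⊆ Y ∧ (α Y (c ∩ Y)).card ≤ k ∧
      β (α Y (c ∩ Y)) ∈ C ∧ β (α Y (c ∩ Y)) ∩ Y = c ∩ Y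

/-- The cube of `2^X` with support `Y` containing `c`. -/
def cubeAt (c Y : Finset X) : Finset (Finset X) :=
  Y.powerset.image (fun s => (c \ Y) ∪ s)

/-- Condition (C1): for every `c ∈ C`, the cube with support `r c` containing `c`
is a cube of `C`. -/
def CondC1 (C : Finset (Finset X)) (r : Finset X → Finset X) : Prop :=
  ∀ c ∈ C, cubeAt c (r c) ⊆ C

/-- Condition (C2): every cube of `C` has a unique concept `c` with `r c ∩ supp B = ∅`. -/
def CondC2 (C : Finset (Finset X)) (r : Finset X → Finset X) : Prop :=
  ∀ B Y, B ⊆ C → IsCubeS B Y → ∃! c, c ∈ B ∧ r c ∩ Y = ∅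

/-- The facet of the cross-polytope corresponding to a subset `c ⊆ X`:
`+x ∈ σ_c` iff `x ∈ c` (where `+x = Sum.inl x` and `-x = Sum.inr x`). -/
def facet (c : Finset X) : Finset (X ⊕ X) :=
  c.image Sum.inl ∪ (Finset.univ \ c).image Sum.inr

/-- A list of facets of the cross-polytope is a partial shelling. -/
def IsPartialShelling (L : List (Finset (X ⊕ X))) : Prop :=
  L.Nodup ∧ ∀ i j, i < j → j < L.length →
    ∃ k < j, ((L.getD k ∅) ∩ (L.getD j ∅)).card = Fintype.card X - 1 ∧
      (L.getD i ∅) ∩ (L.getD j ∅) ⊆ (L.getD k ∅) ∩ (L.getD j ∅)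

/-- `Q` is an incomplete cube for `(C, D)` with support `σ`: a cube of `C` whose
support `σ` is a missed simplex (shattered by `C` but not by `D`). -/
def IsIncompleteCube (C D Q : Finset (Finset X)) (σ : Finset X) : Prop :=
  Q ⊆ C ∧ IsCubeS Q σ ∧ Shatters C σ ∧ ¬ Shatters D σ

/-- `c` is the source of the incomplete cube `Q` with support `σ`:
`c ∈ Q` and `c ∩ σ ∉ D|σ`. -/
def IsSource (D Q : Finset (Finset X)) (σ : Finset X) (c : Finset X) : Prop :=
  c ∈ Q ∧ c ∩ σ ∉ restrictTo D σ

/-- The restriction `C_x = C|(X \ {x})`, with concepts viewed as subsets of `X`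
avoiding `x`. -/
def restrictX (C : Finset (Finset X)) (x : X) : Finset (Finset X) :=
  C.image (·.erase x)

/-- The reduction `C^x = {c ⊆ X \ {x} : c ∈ C and c ∪ {x} ∈ C}`. -/
def reduction (C : Finset (Finset X)) (x : X) : Finset (Finset X) :=
  C.filter (fun c => x ∉ c ∧ insert x c ∈ C)

/-- The interval `B(c,c') = {t : d(c,t) + d(t,c') = d(c,c')}`. -/
def interval (c c' : Finset X) : Finset (Finset X) :=
  Finset.univ.filter (fun t => hdist c t + hdist t c' = hdist c c')

/-- `C'` is convex in `C`. -/
def IsConvexIn (C C' : Finset (Finset X)) : Prop :=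
  ∀ c ∈ C', ∀ c'' ∈ C', interval c c'' ∩ C ⊆ C'

/-- `C'` is locally convex in `C`. -/
def IsLocallyConvexIn (C C' : Finset (Finset X)) : Prop :=
  ∀ c ∈ C', ∀ c'' ∈ C', hdist c c'' = 2 → interval c c'' ∩ C ⊆ C'

/-- `C` is a conditional antimatroid: contains `∅`, closed under intersection, and
every concept is generated by its extremal points. -/
def IsCondAntimatroid (C : Finset (Finset X)) : Prop :=
  ∅ ∈ C ∧ (∀ c ∈ C, ∀ c' ∈ C, c ∩ c' ∈ C) ∧
  ∀ c ∈ C, ∀ c' ∈ C, (c.filter (fun x => c.erase x ∈ C)) ⊆ c' → c ⊆ c'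

open scoped symmDiff

lemma hdist_eq_card_symmDiff (c c' : Finset X) : hdist c c' = (c ∆ c').card := by
  rw [hdist, symmDiff_def]; rfl

lemma hdist_eq_zero_iff {c c' : Finset X} : hdist c c' = 0 ↔ c = c' := by
  rw [hdist_eq_card_symmDiff, Finset.card_eq_zero, ← Finset.bot_eq_empty, symmDiff_eq_bot]

lemma mem_shatteredSets {C : Finset (Finset X)} {Y : Finset X} :
    Y ∈ shatteredSets C ↔ Shatters C Y := by
  simp [shatteredSets]

lemma shatters_mono {C D : Finset (Finset X)} (h : C ⊆ D) {Y : Finset X}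
    (hY : Shatters C Y) : Shatters D Y := by
  intro s hs
  obtain ⟨c, hc, hcs⟩ := hY s hs
  exact ⟨c, h hc, hcs⟩

lemma shatteredSets_mono {C D : Finset (Finset X)} (h : C ⊆ D) :
    shatteredSets C ⊆ shatteredSets D := by
  intro Y hY
  rw [mem_shatteredSets] at *
  exact shatters_mono h hY

theorem pajor (D : Finset (Finset X)) : D.card ≤ (shatteredSets D).card := by
  induction D using Finset.strongInduction with
  | _ D ih =>
    rcases le_or_gt D.card 1 with hD | hD
    · rcases Nat.le_one_iff_eq_zero_or_eq_one.mp hD with h0 | h1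
      · simp [h0]
      · obtain ⟨c, hc⟩ := Finset.card_eq_one.mp h1
        have : (∅ : Finset X) ∈ shatteredSets D := by
          rw [mem_shatteredSets]
          intro s hs
          simp only [Finset.mem_powerset, Finset.subset_empty] at hs
          exact ⟨c, by simp [hc, hs]⟩
        calc D.card = 1 := h1
          _ ≤ _ := Finset.card_pos.mpr ⟨∅, this⟩
    · obtain ⟨a, ha, b, hb, hab⟩ := Finset.one_lt_card.mp hD
      have hx : ∃ x : X, (x ∈ a ∧ x ∉ b) ∨ (x ∈ b ∧ x ∉ a) := by
        by_contra h
        push_neg at h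
        apply hab
        ext z
        have := h z
        tauto
      obtain ⟨x, hx⟩ := hx
      set D0 := D.filter (fun c => x ∉ c) with hD0
      set D1 := D.filter (fun c => x ∈ c) with hD1
      have hne0 : D0.Nonempty := by
        rcases hx with ⟨_, _⟩ | ⟨_, _⟩
        · exact ⟨b, Finset.mem_filter.mpr ⟨hb, by tauto⟩⟩
        · exact ⟨a, Finset.mem_filter.mpr ⟨ha, by tauto⟩⟩
      have hne1 : D1.Nonempty := by
        rcases hx with ⟨_, _⟩ | ⟨_, _⟩
        · exact ⟨a, Finset.mem_filter.mpr ⟨ha, by tauto⟩⟩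
        · exact ⟨b, Finset.mem_filter.mpr ⟨hb, by tauto⟩⟩
      have hsub0 : D0 ⊂ D := by
        constructor
        · exact Finset.filter_subset _ _
        · intro hsub
          obtain ⟨c, hc⟩ := hne1
          rw [Finset.mem_filter] at hc
          have := hsub hc.1
          rw [hD0, Finset.mem_filter] at this
          exact this.2 hc.2
      have hsub1 : D1 ⊂ D := by
        constructor
        · exact Finset.filter_subset _ _
        · intro hsub
          obtain ⟨c, hc⟩ := hne0
          rw [Finset.mem_filter] at hc
          have := hsub hc.1
          rw [hD1, Finset.mem_filter] at this
          exact hc.2 this.2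
      have hcard : D1.card + D0.card = D.card := by
        rw [hD0, hD1]
        exact Finset.card_filter_add_card_filter_not (fun c => x ∈ c)
      -- x not in any shattered set of D0 or D1
      have hnotmem0 : ∀ Y ∈ shatteredSets D0, x ∉ Y := by
        intro Y hY hxY
        rw [mem_shatteredSets] at hY
        obtain ⟨c, hc, hcY⟩ := hY {x} (by simpa using hxY)
        rw [Finset.mem_filter] at hc
        have : x ∈ c ∩ Y := hcY ▸ Finset.mem_singleton_self x
        exact hc.2 (Finset.mem_inter.mp this).1
      have hnotmem1 : ∀ Y ∈ shatteredSets D1, x ∉ Y := by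
        intro Y hY hxY
        rw [mem_shatteredSets] at hY
        obtain ⟨c, hc, hcY⟩ := hY ∅ (by simp)
        rw [Finset.mem_filter] at hc
        have : x ∈ c ∩ Y := Finset.mem_inter.mpr ⟨hc.2, hxY⟩
        rw [hcY] at this
        simp at this
      have hsub0' : shatteredSets D0 ⊆ shatteredSets D :=
        shatteredSets_mono (Finset.filter_subset _ _)
      have hsub1' : shatteredSets D1 ⊆ shatteredSets D :=
        shatteredSets_mono (Finset.filter_subset _ _)
      -- the insert-x map on the intersection
      set I := shatteredSets D0 ∩ shatteredSets D1 with hI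
      have hins : ∀ Y ∈ I, insert x Y ∈ shatteredSets D := by
        intro Y hYI
        rw [hI, Finset.mem_inter] at hYI
        obtain ⟨hY0, hY1⟩ := hYI
        rw [mem_shatteredSets] at hY0 hY1 ⊢
        intro s hs
        rw [Finset.mem_powerset] at hs
        by_cases hxs : x ∈ s
        · obtain ⟨c, hc, hcY⟩ := hY1 (s.erase x) (by
            rw [Finset.mem_powerset]
            intro z hz
            rw [Finset.mem_erase] at hz
            have := hs hz.2
            rw [Finset.mem_insert] at this
            tauto)
          rw [Finset.mem_filter] at hc
          refine ⟨c, hc.1, ?_⟩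
          rw [Finset.inter_insert_of_mem hc.2, hcY, Finset.insert_erase hxs]
        · obtain ⟨c, hc, hcY⟩ := hY0 s (by
            rw [Finset.mem_powerset]
            intro z hz
            have := hs hz
            rw [Finset.mem_insert] at this
            rcases this with h | h
            · exact absurd (h ▸ hz) hxs
            · exact h)
          rw [Finset.mem_filter] at hc
          refine ⟨c, hc.1, ?_⟩
          rw [Finset.inter_insert_of_notMem hc.2, hcY]
      have hinj : Set.InjOn (insert x) (I : Set (Finset X)) := by
        intro Y1 h1 Y2 h2 heq
        have hx1 : x ∉ Y1 := hnotmem0 Y1 (Finset.mem_inter.mp h1).1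
        have hx2 : x ∉ Y2 := hnotmem0 Y2 (Finset.mem_inter.mp h2).1
        ext z
        by_cases hz : z = x
        · subst hz; simp [hx1, hx2]
        · constructor
          · intro h
            have : z ∈ insert x Y2 := heq ▸ Finset.mem_insert_of_mem h
            rw [Finset.mem_insert] at this; tauto
          · intro h
            have : z ∈ insert x Y1 := heq ▸ Finset.mem_insert_of_mem h
            rw [Finset.mem_insert] at this; tauto
      have hdisj : Disjoint (I.image (insert x)) (shatteredSets D0 ∪ shatteredSets D1) := by
        rw [Finset.disjoint_left]
        intro Y hY hY'
        obtain ⟨Z, _, hZ⟩ := Finset.mem_image.mp hY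
        have hxY : x ∈ Y := hZ ▸ Finset.mem_insert_self x Z
        rw [Finset.mem_union] at hY'
        rcases hY' with h | h
        · exact hnotmem0 Y h hxY
        · exact hnotmem1 Y h hxY
      have himsub : I.image (insert x) ⊆ shatteredSets D := by
        intro Y hY
        obtain ⟨Z, hZI, hZ⟩ := Finset.mem_image.mp hY
        exact hZ ▸ hins Z hZI
      have huni : shatteredSets D0 ∪ shatteredSets D1 ⊆ shatteredSets D :=
        Finset.union_subset hsub0' hsub1'
      have hcard2 : (shatteredSets D0 ∪ shatteredSets D1).card + (I.image (insert x)).card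
          ≤ (shatteredSets D).card := by
        rw [← Finset.card_union_of_disjoint hdisj.symm]
        exact Finset.card_le_card (Finset.union_subset huni himsub)
      have hicard : (I.image (insert x)).card = I.card := Finset.card_image_of_injOn hinj
      have := Finset.card_union_add_card_inter (shatteredSets D0) (shatteredSets D1)
      rw [← hI] at this
      have h0 := ih D0 hsub0
      have h1 := ih D1 hsub1
      omega

lemma mem_reduction_not_mem {D : Finset (Finset X)} {x : X} {c : Finset X}
    (h : c ∈ reduction D x) : x ∉ c := (Finset.mem_filter.mp h).2.1

lemma reduction_subset {D : Finset (Finset X)} {x : X} : reduction D x ⊆ D :=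
  Finset.filter_subset _ _

lemma card_restrictX_add_card_reduction (D : Finset (Finset X)) (x : X) :
    (restrictX D x).card + (reduction D x).card = D.card := by
  classical
  set D0 := D.filter (fun c => x ∉ c) with hD0
  set D1 := D.filter (fun c => x ∈ c) with hD1
  set E1 := D1.image (·.erase x) with hE1
  have hsplit : restrictX D x = D0 ∪ E1 := by
    ext c
    simp only [restrictX, Finset.mem_image, Finset.mem_union, hD0, hE1, hD1,
      Finset.mem_filter]
    constructor
    · rintro ⟨a, ha, rfl⟩
      by_cases hx : x ∈ a
      · exact Or.inr ⟨a, ⟨ha, hx⟩, rfl⟩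
      · rw [Finset.erase_eq_of_notMem hx]
        exact Or.inl ⟨ha, hx⟩
    · rintro (⟨hc, hx⟩ | ⟨a, ⟨ha, _⟩, rfl⟩)
      · exact ⟨c, hc, Finset.erase_eq_of_notMem hx⟩
      · exact ⟨a, ha, rfl⟩
  have hE1card : E1.card = D1.card := by
    rw [hE1]
    apply Finset.card_image_of_injOn
    intro a ha b hb hab
    rw [hD1, Finset.coe_filter, Set.mem_setOf_eq] at ha hb
    have hab' : a.erase x = b.erase x := hab
    ext z
    by_cases hz : z = x
    · subst hz; simp [ha.2, hb.2]
    · constructor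
      · intro h
        have : z ∈ b.erase x := hab' ▸ Finset.mem_erase.mpr ⟨hz, h⟩
        exact (Finset.mem_erase.mp this).2
      · intro h
        have : z ∈ a.erase x := hab'.symm ▸ Finset.mem_erase.mpr ⟨hz, h⟩
        exact (Finset.mem_erase.mp this).2
  have hinter : D0 ∩ E1 = reduction D x := by
    ext c
    simp only [Finset.mem_inter, hD0, Finset.mem_filter, hE1, hD1, Finset.mem_image,
      reduction]
    constructor
    · rintro ⟨⟨hc, hx⟩, a, ha, rfl⟩
      refine ⟨hc, hx, ?_⟩
      rw [Finset.insert_erase ha.2]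
      exact ha.1
    · rintro ⟨hc, hx, hins⟩
      exact ⟨⟨hc, hx⟩, insert x c, ⟨hins, Finset.mem_insert_self x c⟩,
        Finset.erase_insert hx⟩
  have hDcard : D1.card + D0.card = D.card :=
    Finset.card_filter_add_card_filter_not (fun c => x ∈ c)
  have := Finset.card_union_add_card_inter D0 E1
  rw [hinter, ← hsplit] at this
  omega

lemma not_mem_of_shatters {E : Finset (Finset X)} {x : X} {Y : Finset X}
    (hall : ∀ c ∈ E, x ∉ c) (hY : Shatters E Y) : x ∉ Y := by
  intro hxY
  obtain ⟨c, hc, hcY⟩ := hY {x} (by simpa using hxY)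
  have : x ∈ c ∩ Y := hcY ▸ Finset.mem_singleton_self x
  exact hall c hc (Finset.mem_inter.mp this).1

lemma shatteredSets_restrictX (D : Finset (Finset X)) (x : X) :
    shatteredSets (restrictX D x) = (shatteredSets D).filter (fun Y => x ∉ Y) := by
  ext Y
  rw [Finset.mem_filter, mem_shatteredSets, mem_shatteredSets]
  constructor
  · intro hY
    have hxY : x ∉ Y := not_mem_of_shatters (fun c hc => by
      obtain ⟨a, _, rfl⟩ := Finset.mem_image.mp hc
      exact Finset.notMem_erase x a) hY
    refine ⟨?_, hxY⟩
    intro s hs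
    obtain ⟨c, hc, hcY⟩ := hY s hs
    obtain ⟨a, ha, rfl⟩ := Finset.mem_image.mp hc
    refine ⟨a, ha, ?_⟩
    rw [← hcY]
    ext z
    simp only [Finset.mem_inter, Finset.mem_erase]
    constructor
    · intro ⟨h1, h2⟩
      exact ⟨⟨fun hz => hxY (hz ▸ h2), h1⟩, h2⟩
    · intro ⟨⟨_, h1⟩, h2⟩
      exact ⟨h1, h2⟩
  · intro ⟨hY, hxY⟩ s hs
    obtain ⟨c, hc, hcY⟩ := hY s hs
    refine ⟨c.erase x, Finset.mem_image_of_mem _ hc, ?_⟩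
    rw [← hcY]
    ext z
    simp only [Finset.mem_inter, Finset.mem_erase]
    constructor
    · intro ⟨⟨_, h1⟩, h2⟩
      exact ⟨h1, h2⟩
    · intro ⟨h1, h2⟩
      exact ⟨⟨fun hz => hxY (hz ▸ h2), h1⟩, h2⟩

lemma shatters_insert_of_reduction {D : Finset (Finset X)} {x : X} {Z : Finset X}
    (hZ : Shatters (reduction D x) Z) : Shatters D (insert x Z) := by
  have hxZ : x ∉ Z := not_mem_of_shatters (fun c hc => mem_reduction_not_mem hc) hZ
  intro s hs
  rw [Finset.mem_powerset] at hs
  by_cases hxs : x ∈ s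
  · obtain ⟨c, hc, hcZ⟩ := hZ (s.erase x) (by
      rw [Finset.mem_powerset]
      intro z hz
      rw [Finset.mem_erase] at hz
      have := hs hz.2
      rw [Finset.mem_insert] at this
      tauto)
    rw [reduction, Finset.mem_filter] at hc
    refine ⟨insert x c, hc.2.2, ?_⟩
    rw [Finset.insert_inter_of_mem (Finset.mem_insert_self x Z),
      Finset.inter_insert_of_notMem hc.2.1, hcZ, Finset.insert_erase hxs]
  · obtain ⟨c, hc, hcZ⟩ := hZ s (by
      rw [Finset.mem_powerset]
      intro z hz
      have := hs hz
      rw [Finset.mem_insert] at this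
      rcases this with h | h
      · exact absurd (h ▸ hz) hxs
      · exact h)
    have hxc : x ∉ c := mem_reduction_not_mem hc
    refine ⟨c, reduction_subset hc, ?_⟩
    rw [Finset.inter_insert_of_notMem hxc, hcZ]

lemma ample_reduction {D : Finset (Finset X)} (hD : IsAmple D) (x : X) :
    IsAmple (reduction D x) ∧
      ∀ Y : Finset X, Shatters D Y → x ∈ Y → Shatters (reduction D x) (Y.erase x) := by
  classical
  set A := (shatteredSets D).filter (fun Y => x ∈ Y) with hA
  set B := (shatteredSets D).filter (fun Y => x ∉ Y) with hB
  have hABcard : A.card + B.card = (shatteredSets D).card :=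
    Finset.card_filter_add_card_filter_not (fun Y => x ∈ Y)
  have hBeq : B = shatteredSets (restrictX D x) := (shatteredSets_restrictX D x).symm
  -- injection from shattered sets of the reduction into A
  have hinotmem : ∀ Z ∈ shatteredSets (reduction D x), x ∉ Z := fun Z hZ =>
    not_mem_of_shatters (fun c hc => mem_reduction_not_mem hc)
      (mem_shatteredSets.mp hZ)
  have himsub : (shatteredSets (reduction D x)).image (insert x) ⊆ A := by
    intro Y hY
    obtain ⟨Z, hZ, rfl⟩ := Finset.mem_image.mp hY
    rw [hA, Finset.mem_filter]
    exact ⟨mem_shatteredSets.mpr (shatters_insert_of_reduction (mem_shatteredSets.mp hZ)),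
      Finset.mem_insert_self x Z⟩
  have hinj : Set.InjOn (insert x) ((shatteredSets (reduction D x)) : Set (Finset X)) := by
    intro Y1 h1 Y2 h2 heq
    have hx1 : x ∉ Y1 := hinotmem Y1 h1
    have hx2 : x ∉ Y2 := hinotmem Y2 h2
    ext z
    by_cases hz : z = x
    · subst hz; simp [hx1, hx2]
    · constructor
      · intro h
        have : z ∈ insert x Y2 := heq ▸ Finset.mem_insert_of_mem h
        rw [Finset.mem_insert] at this; tauto
      · intro h
        have : z ∈ insert x Y1 := heq ▸ Finset.mem_insert_of_mem h
        rw [Finset.mem_insert] at this; tauto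
  have himcard : ((shatteredSets (reduction D x)).image (insert x)).card
      = (shatteredSets (reduction D x)).card := Finset.card_image_of_injOn hinj
  have h1 := pajor (restrictX D x)
  have h2 := pajor (reduction D x)
  have h3 := card_restrictX_add_card_reduction D x
  have h4 : ((shatteredSets (reduction D x)).image (insert x)).card ≤ A.card :=
    Finset.card_le_card himsub
  have hDample : D.card = (shatteredSets D).card := hD
  -- all inequalities are equalities
  have hredample : (reduction D x).card = (shatteredSets (reduction D x)).card := by
    rw [← hBeq] at h1
    omega
  have himeq : (shatteredSets (reduction D x)).image (insert x) = A := by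
    apply Finset.eq_of_subset_of_card_le himsub
    rw [himcard]
    rw [← hBeq] at h1
    omega
  refine ⟨hredample, ?_⟩
  intro Y hY hxY
  have hYA : Y ∈ A := by
    rw [hA, Finset.mem_filter]
    exact ⟨mem_shatteredSets.mpr hY, hxY⟩
  rw [← himeq] at hYA
  obtain ⟨Z, hZ, hZY⟩ := Finset.mem_image.mp hYA
  have : Y.erase x = Z := by
    rw [← hZY, Finset.erase_insert (hinotmem Z hZ)]
  rw [this]
  exact mem_shatteredSets.mp hZ

lemma ample_cube : ∀ (n : ℕ) (Y : Finset X), Y.card = n →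
    ∀ D : Finset (Finset X), IsAmple D → Shatters D Y →
    ∃ b : Finset X, b ∩ Y = ∅ ∧ ∀ s ⊆ Y, b ∪ s ∈ D := by
  intro n
  induction n with
  | zero =>
    intro Y hY D _ hsh
    rw [Finset.card_eq_zero] at hY
    subst hY
    obtain ⟨c, hc, -⟩ := hsh ∅ (by simp)
    refine ⟨c, Finset.inter_empty c, ?_⟩
    intro s hs
    rw [Finset.subset_empty] at hs
    subst hs
    simpa using hc
  | succ n ih =>
    intro Y hY D hD hsh
    have hne : Y.Nonempty := Finset.card_pos.mp (by omega)
    obtain ⟨x, hx⟩ := hne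
    obtain ⟨hred, hsh'⟩ := ample_reduction hD x
    have hYx : (Y.erase x).card = n := by
      rw [Finset.card_erase_of_mem hx, hY]
      omega
    obtain ⟨b, hb, hball⟩ := ih (Y.erase x) hYx (reduction D x) hred (hsh' Y hsh hx)
    have hxb : x ∉ b := by
      have : b ∪ ∅ ∈ reduction D x := hball ∅ (Finset.empty_subset _)
      rw [Finset.union_empty] at this
      exact mem_reduction_not_mem this
    refine ⟨b, ?_, ?_⟩
    · ext z
      simp only [Finset.mem_inter, Finset.notMem_empty, iff_false, not_and]
      intro hzb hzY
      by_cases hz : z = x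
      · exact hxb (hz ▸ hzb)
      · have : z ∈ b ∩ (Y.erase x) := Finset.mem_inter.mpr ⟨hzb, Finset.mem_erase.mpr ⟨hz, hzY⟩⟩
        rw [hb] at this
        simp at this
    · intro s hs
      by_cases hxs : x ∈ s
      · have hs' : s.erase x ⊆ Y.erase x := Finset.erase_subset_erase x hs
        have := hball (s.erase x) hs'
        rw [reduction, Finset.mem_filter] at this
        have h2 := this.2.2
        have : insert x (b ∪ s.erase x) = b ∪ s := by
          rw [← Finset.union_insert, Finset.insert_erase hxs]
        rw [this] at h2
        exact h2
      · have hs' : s ⊆ Y.erase x := fun z hz =>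
          Finset.mem_erase.mpr ⟨fun h => hxs (h ▸ hz), hs hz⟩
        exact reduction_subset (hball s hs')

lemma geodesic_step {D : Finset (Finset X)} (h : IsIsometric D) {c c' : Finset X}
    (hc : c ∈ D) (hc' : c' ∈ D) (hne : c ≠ c') :
    ∃ c₁ ∈ D, hdist c c₁ = 1 ∧ hdist c₁ c' + 1 = hdist c c' := by
  set u : {a : Finset X // a ∈ D} := ⟨c, hc⟩ with hu
  set v : {a : Finset X // a ∈ D} := ⟨c', hc'⟩ with hv
  have hd : (oneInclusionGraph D).dist u v = hdist c c' := h.2 u v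
  have hdne : hdist c c' ≠ 0 := fun h0 => hne (hdist_eq_zero_iff.mp h0)
  obtain ⟨p, hp⟩ := h.1.exists_walk_length_eq_dist u v
  have huv : u ≠ v := fun heq => hne (congrArg Subtype.val heq)
  obtain ⟨w, hadj, q, rfl⟩ := SimpleGraph.Walk.exists_eq_cons_of_ne huv p
  · have h1 : hdist c w.1 = 1 := hadj
    have h2 : (oneInclusionGraph D).dist w v ≤ q.length := SimpleGraph.dist_le q
    have h3 : (oneInclusionGraph D).dist u v ≤
        (oneInclusionGraph D).dist u w + (oneInclusionGraph D).dist w v :=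
      h.1.dist_triangle
    have h4 : (oneInclusionGraph D).dist u w = 1 := by rw [h.2 u w]; exact h1
    have h5 : (oneInclusionGraph D).dist w v = hdist w.1 c' := h.2 w v
    rw [SimpleGraph.Walk.length_cons] at hp
    exact ⟨w.1, w.2, h1, by omega⟩

open scoped symmDiff

lemma symmDiff_singleton_not_mem_card {s : Finset X} {z : X} (hz : z ∉ s) :
    (({z} : Finset X) ∆ s).card = s.card + 1 := by
  have : ({z} : Finset X) ∆ s = insert z s := by
    ext a
    simp only [Finset.mem_symmDiff, Finset.mem_singleton, Finset.mem_insert]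
    constructor
    · rintro (⟨rfl, -⟩ | ⟨h, -⟩)
      · exact Or.inl rfl
      · exact Or.inr h
    · rintro (rfl | h)
      · exact Or.inl ⟨rfl, hz⟩
      · exact Or.inr ⟨h, fun he => hz (he ▸ h)⟩
  rw [this, Finset.card_insert_of_notMem hz]

lemma inter_eq_of_symmDiff_singleton {c₁ t Y : Finset X} {z : X}
    (h : t ∆ c₁ = {z}) (hz : z ∉ Y) : c₁ ∩ Y = t ∩ Y := by
  ext a
  simp only [Finset.mem_inter]
  constructor
  · rintro ⟨h1, h2⟩
    refine ⟨?_, h2⟩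
    by_contra hat
    have : a ∈ t ∆ c₁ := Finset.mem_symmDiff.mpr (Or.inr ⟨h1, hat⟩)
    rw [h, Finset.mem_singleton] at this
    exact hz (this ▸ h2)
  · rintro ⟨h1, h2⟩
    refine ⟨?_, h2⟩
    by_contra hac
    have : a ∈ t ∆ c₁ := Finset.mem_symmDiff.mpr (Or.inl ⟨h1, hac⟩)
    rw [h, Finset.mem_singleton] at this
    exact hz (this ▸ h2)

lemma symmDiff_inter_distrib (t c Y : Finset X) :
    (t ∆ c) ∩ Y = (t ∩ Y) ∆ (c ∩ Y) := by
  ext a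
  simp only [Finset.mem_inter, Finset.mem_symmDiff]
  tauto

section MainLemmas

variable {C : Finset (Finset X)} {t Y : Finset X}

lemma missing_pattern (hnew : Shatters (insert t C) Y) (hnotC : ¬ Shatters C Y) :
    ∀ c ∈ C, c ∩ Y ≠ t ∩ Y := by
  intro c hc heq
  apply hnotC
  intro s hs
  obtain ⟨c'', hc'', h⟩ := hnew s hs
  rcases Finset.mem_insert.mp hc'' with rfl | hmem
  · exact ⟨c, hc, heq.trans h⟩
  · exact ⟨c'', hmem, h⟩

lemma flip_mem_of_new (ht : t ∉ C) (hiso : IsIsometric (insert t C))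
    (hnew : Shatters (insert t C) Y) (hnotC : ¬ Shatters C Y) :
    ∀ x ∈ Y, t ∆ {x} ∈ C := by
  intro x hx
  set s : Finset X := (t ∩ Y) ∆ {x} with hs
  have hsY : s ⊆ Y := by
    intro z hz
    rw [hs, Finset.mem_symmDiff] at hz
    rcases hz with ⟨h1, -⟩ | ⟨h1, -⟩
    · exact (Finset.mem_inter.mp h1).2
    · exact (Finset.mem_singleton.mp h1) ▸ hx
  have hsne : s ≠ t ∩ Y := by
    intro heq
    have hxs : x ∈ s ↔ x ∉ t ∩ Y := by
      rw [hs, Finset.mem_symmDiff]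
      simp
    rw [heq] at hxs
    tauto
  obtain ⟨c, hc, hcY⟩ := hnew s (Finset.mem_powerset.mpr hsY)
  have hcC : c ∈ C := by
    rcases Finset.mem_insert.mp hc with rfl | h
    · exact absurd hcY.symm hsne
    · exact h
  have htc : t ≠ c := by
    intro heq
    apply hsne
    rw [← hcY, ← heq]
  obtain ⟨c₁, hc₁, hd1, hd2⟩ := geodesic_step hiso (Finset.mem_insert_self t C)
    (Finset.mem_insert_of_mem hcC) htc
  have hone : (t ∆ c₁).card = 1 := by
    rw [← hdist_eq_card_symmDiff]; exact hd1
  obtain ⟨z, hz⟩ := Finset.card_eq_one.mp hone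
  have hztc : z ∈ t ∆ c := by
    by_contra hzn
    have hassoc : c₁ ∆ c = ({z} : Finset X) ∆ (t ∆ c) := by
      rw [← hz, symmDiff_comm t c₁, symmDiff_assoc, symmDiff_symmDiff_cancel_left]
    have : (c₁ ∆ c).card = (t ∆ c).card + 1 := by
      rw [hassoc]
      exact symmDiff_singleton_not_mem_card hzn
    rw [hdist_eq_card_symmDiff, hdist_eq_card_symmDiff] at hd2
    omega
  have hc₁net : c₁ ≠ t := by
    intro heq
    rw [heq] at hd1
    rw [hdist_eq_zero_iff.mpr rfl] at *
    · have : t ∆ t = ({z} : Finset X) := heq ▸ hz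
      rw [symmDiff_self] at this
      have := this ▸ Finset.mem_singleton_self z
      simp at this
  have hc₁C : c₁ ∈ C := by
    rcases Finset.mem_insert.mp hc₁ with h | h
    · exact absurd h hc₁net
    · exact h
  by_cases hzY : z ∈ Y
  · -- z must equal x
    have : z ∈ (t ∆ c) ∩ Y := Finset.mem_inter.mpr ⟨hztc, hzY⟩
    rw [symmDiff_inter_distrib, hcY, hs, symmDiff_symmDiff_cancel_left,
      Finset.mem_singleton] at this
    subst this
    have : c₁ = t ∆ {z} := by
      rw [← hz, symmDiff_symmDiff_cancel_left]
    exact this ▸ hc₁C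
  · -- contradiction with the missing pattern
    exfalso
    exact missing_pattern hnew hnotC c₁ hc₁C (inter_eq_of_symmDiff_singleton hz hzY)

lemma mem_of_flip_mem (hnew : Shatters (insert t C) Y) (hnotC : ¬ Shatters C Y) :
    ∀ x : X, t ∆ {x} ∈ C → x ∈ Y := by
  intro x hxC
  by_contra hxY
  have hsd : t ∆ (t ∆ {x}) = ({x} : Finset X) := symmDiff_symmDiff_cancel_left t {x}
  exact missing_pattern hnew hnotC _ hxC
    (inter_eq_of_symmDiff_singleton hsd (by simpa using hxY))

end MainLemmas

lemma key_cube {C : Finset (Finset X)} {t Y₀ : Finset X}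
    (hY₀' : Shatters (insert t C) Y₀) (hY₀ : ¬ Shatters C Y₀) :
    ∀ B', IsCubeOf (insert t C) B' → t ∈ B' → B' ⊆ cubeAt t Y₀ := by
  rintro B' ⟨hB'sub, Z, b', hb'Z, rfl⟩ htB'
  obtain ⟨s₁, hs₁, ht1⟩ := Finset.mem_image.mp htB'
  rw [Finset.mem_powerset] at hs₁
  have hb'mem : ∀ z ∈ b', z ∉ Z := by
    intro z hz hzZ
    have : z ∈ b' ∩ Z := Finset.mem_inter.mpr ⟨hz, hzZ⟩
    rw [hb'Z] at this; simp at this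
  have hZY : Z ⊆ Y₀ := by
    intro x hxZ
    have hxb' : x ∉ b' := fun h => hb'mem x h hxZ
    have hsx : s₁ ∆ {x} ⊆ Z := by
      intro z hz
      rw [Finset.mem_symmDiff] at hz
      rcases hz with ⟨h1, -⟩ | ⟨h1, -⟩
      · exact hs₁ h1
      · exact (Finset.mem_singleton.mp h1) ▸ hxZ
    have hwB' : b' ∪ (s₁ ∆ {x}) ∈ Z.powerset.image (fun s => b' ∪ s) :=
      Finset.mem_image.mpr ⟨_, Finset.mem_powerset.mpr hsx, rfl⟩
    have hw : b' ∪ (s₁ ∆ {x}) = t ∆ {x} := by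
      rw [← ht1]
      ext z
      simp only [Finset.mem_union, Finset.mem_symmDiff, Finset.mem_singleton]
      by_cases hzb : z ∈ b'
      · have h1 : z ∉ s₁ := fun h => hb'mem z hzb (hs₁ h)
        have h2 : z ≠ x := fun h => hb'mem z hzb (h ▸ hxZ)
        tauto
      · tauto
    have hwt : t ∆ {x} ≠ t := by
      intro heq
      have h1 : x ∈ t ∆ {x} ↔ x ∉ t := by
        rw [Finset.mem_symmDiff]; simp
      rw [heq] at h1
      tauto
    have hwC : t ∆ {x} ∈ C := by
      have h3 := hB'sub (hw ▸ hwB')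
      rcases Finset.mem_insert.mp h3 with h | h
      · exact absurd h hwt
      · exact h
    exact mem_of_flip_mem hY₀' hY₀ x hwC
  intro e he
  obtain ⟨s, hsZ, rfl⟩ := Finset.mem_image.mp he
  rw [Finset.mem_powerset] at hsZ
  have hb'eq : b' = t \ Z := by
    ext z
    simp only [Finset.mem_sdiff]
    constructor
    · intro hzb
      exact ⟨ht1 ▸ Finset.mem_union_left _ hzb, hb'mem z hzb⟩
    · rintro ⟨hzt, hzZ⟩
      rw [← ht1] at hzt
      rcases Finset.mem_union.mp hzt with h | h
      · exact h
      · exact absurd (hs₁ h) hzZ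
  have hediff : (b' ∪ s) \ Y₀ = t \ Y₀ := by
    ext z
    simp only [Finset.mem_sdiff, Finset.mem_union]
    constructor
    · rintro ⟨h1 | h1, h2⟩
      · rw [hb'eq] at h1
        exact ⟨(Finset.mem_sdiff.mp h1).1, h2⟩
      · exact absurd (hZY (hsZ h1)) h2
    · rintro ⟨h1, h2⟩
      refine ⟨Or.inl ?_, h2⟩
      rw [hb'eq, Finset.mem_sdiff]
      exact ⟨h1, fun h => h2 (hZY h)⟩
  rw [cubeAt]
  apply Finset.mem_image.mpr
  refine ⟨(b' ∪ s) ∩ Y₀, Finset.mem_powerset.mpr Finset.inter_subset_right, ?_⟩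
  rw [← hediff, Finset.sdiff_union_inter]

lemma ample_insert {C : Finset (Finset X)} {t Y₀ : Finset X} (hC : IsAmple C) (ht : t ∉ C)
    (hY₀' : Shatters (insert t C) Y₀) (hY₀ : ¬ Shatters C Y₀)
    (huniq : ∀ Y, Shatters (insert t C) Y → ¬ Shatters C Y → Y = Y₀) :
    IsAmple (insert t C) := by
  have hcard' : (insert t C).card = C.card + 1 := Finset.card_insert_of_notMem ht
  have hpaj := pajor (insert t C)
  have hsub2 : shatteredSets (insert t C) ⊆ insert Y₀ (shatteredSets C) := by
    intro Y hY
    rw [mem_shatteredSets] at hY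
    by_cases h : Shatters C Y
    · exact Finset.mem_insert_of_mem (mem_shatteredSets.mpr h)
    · exact Finset.mem_insert.mpr (Or.inl (huniq Y hY h))
  have hY₀notC : Y₀ ∉ shatteredSets C := fun h => hY₀ (mem_shatteredSets.mp h)
  have hcard2 : (insert Y₀ (shatteredSets C)).card = (shatteredSets C).card + 1 :=
    Finset.card_insert_of_notMem hY₀notC
  have hle := Finset.card_le_card hsub2
  rw [IsAmple] at *
  omega

lemma cube_base {C : Finset (Finset X)} {t Y₀ : Finset X}
    (hY₀' : Shatters (insert t C) Y₀) (hY₀ : ¬ Shatters C Y₀)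
    (hample' : IsAmple (insert t C)) :
    cubeAt t Y₀ ⊆ insert t C := by
  obtain ⟨b, hb, hball⟩ := ample_cube Y₀.card Y₀ rfl (insert t C) hample' hY₀'
  have huniqpat : ∀ c ∈ insert t C, c ∩ Y₀ = t ∩ Y₀ → c = t := by
    intro c hc hcY
    rcases Finset.mem_insert.mp hc with rfl | h
    · rfl
    · exact absurd hcY (missing_pattern hY₀' hY₀ c h)
  have hbt : b ∪ (t ∩ Y₀) = t := by
    apply huniqpat _ (hball _ Finset.inter_subset_right)
    rw [Finset.union_inter_distrib_right, hb, Finset.empty_union,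
      Finset.inter_assoc, Finset.inter_self]
  have hbeq : b = t \ Y₀ := by
    ext z
    simp only [Finset.mem_sdiff]
    constructor
    · intro hzb
      refine ⟨?_, fun hzY => ?_⟩
      · rw [← hbt]; exact Finset.mem_union_left _ hzb
      · have : z ∈ b ∩ Y₀ := Finset.mem_inter.mpr ⟨hzb, hzY⟩
        rw [hb] at this; simp at this
    · rintro ⟨hzt, hzY⟩
      have : z ∈ b ∪ (t ∩ Y₀) := hbt.symm ▸ hzt
      rcases Finset.mem_union.mp this with h | h
      · exact h
      · exact absurd (Finset.mem_inter.mp h).2 hzY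
  intro e he
  rw [cubeAt] at he
  obtain ⟨s, hs, rfl⟩ := Finset.mem_image.mp he
  rw [Finset.mem_powerset] at hs
  rw [← hbeq]
  exact hball s hs

lemma corner_of_insert {C : Finset (Finset X)} {t Y₀ : Finset X}
    (hY₀' : Shatters (insert t C) Y₀) (hY₀ : ¬ Shatters C Y₀)
    (hample' : IsAmple (insert t C)) :
    IsCornerOf (insert t C) t := by
  have hcubesub : cubeAt t Y₀ ⊆ insert t C := cube_base hY₀' hY₀ hample'
  have htcube : t ∈ cubeAt t Y₀ := by
    rw [cubeAt]
    apply Finset.mem_image.mpr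
    exact ⟨t ∩ Y₀, Finset.mem_powerset.mpr Finset.inter_subset_right,
      Finset.sdiff_union_inter t Y₀⟩
  have hcubeS : IsCubeS (cubeAt t Y₀) Y₀ :=
    ⟨t \ Y₀, Finset.sdiff_inter_self _ _, rfl⟩
  have hkey := key_cube hY₀' hY₀
  refine ⟨Finset.mem_insert_self t C, cubeAt t Y₀, ⟨⟨⟨hcubesub, Y₀, hcubeS⟩, ?_⟩, htcube⟩, ?_⟩
  · intro B'' hB'' hsub
    exact Finset.Subset.antisymm hsub (hkey B'' hB'' (hsub htcube))
  · rintro B ⟨⟨hBcube, hBmax⟩, htB⟩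
    exact hBmax (cubeAt t Y₀) ⟨hcubesub, Y₀, hcubeS⟩ (hkey B hBcube htB)


/-- If `C` is ample, `t ∉ C`, and `C ∪ {t}` is isometric, then `C ∪ {t}`
is ample and `t` is a corner of `C ∪ {t}`. -/
theorem stmt_5 (C : Finset (Finset X)) (hC : IsAmple C) (t : Finset X) (ht : t ∉ C)
    (hiso : IsIsometric (insert t C)) :
    IsAmple (insert t C) ∧ IsCornerOf (insert t C) t := by
  have hex : ∃ Y₀, Shatters (insert t C) Y₀ ∧ ¬ Shatters C Y₀ := by
    by_contra hno
    push_neg at hno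
    have hsub : shatteredSets (insert t C) ⊆ shatteredSets C := by
      intro Y hY
      rw [mem_shatteredSets] at *
      exact hno Y hY
    have h1 := Finset.card_le_card hsub
    have h2 := pajor (insert t C)
    have h3 : (insert t C).card = C.card + 1 := Finset.card_insert_of_notMem ht
    rw [IsAmple] at hC
    omega
  obtain ⟨Y₀, hY₀', hY₀⟩ := hex
  have huniq : ∀ Y, Shatters (insert t C) Y → ¬ Shatters C Y → Y = Y₀ := by
    intro Y h1 h2
    apply Finset.Subset.antisymm
    · intro x hx
      exact mem_of_flip_mem hY₀' hY₀ x (flip_mem_of_new ht hiso h1 h2 x hx)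
    · intro x hx
      exact mem_of_flip_mem h1 h2 x (flip_mem_of_new ht hiso hY₀' hY₀ x hx)
  have hample' : IsAmple (insert t C) := ample_insert hC ht hY₀' hY₀ huniq
  exact ⟨hample', corner_of_insert hY₀' hY₀ hample'⟩
end

section
/- If every ample concept class admits a corner peeling (i.e., is dismantlable), then for every n the n-dimensional cross-polytope O_n is extendably shellable: every partial shelling of O_n can be extended to a partial shelling containing all 2^n facets. -/
variable {X : Type} [Fintype X] [DecidableEq X]

namespace Stmt7Aux
set_option linter.unusedSectionVars false

variable {X : Type} [Fintype X] [DecidableEq X]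

/-- Flip one coordinate. -/
def flipc (x : X) (c : Finset X) : Finset X := if x ∈ c then c.erase x else insert x c

/-- Symmetric difference as a finset. -/
def diffs (c c' : Finset X) : Finset X := (c \ c') ∪ (c' \ c)

lemma mem_diffs {c c' : Finset X} {x : X} : x ∈ diffs c c' ↔ ¬(x ∈ c ↔ x ∈ c') := by
  simp only [diffs, Finset.mem_union, Finset.mem_sdiff]
  tauto

lemma hdist_eq (c c' : Finset X) : hdist c c' = (diffs c c').card := rfl

lemma diffs_comm (c c' : Finset X) : diffs c c' = diffs c' c := by
  ext x; simp only [mem_diffs]; tauto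

lemma diffs_eq_empty {c c' : Finset X} : diffs c c' = ∅ ↔ c = c' := by
  constructor
  · intro h; ext x
    have := (Finset.eq_empty_iff_forall_notMem.1 h) x
    rw [mem_diffs] at this; tauto
  · rintro rfl; ext x; rw [mem_diffs]; simp

lemma mem_flipc {a x : X} {c : Finset X} :
    a ∈ flipc x c ↔ (if a = x then x ∉ c else a ∈ c) := by
  unfold flipc
  by_cases h : x ∈ c <;> by_cases h2 : a = x
  · subst h2; simp [h]
  · simp [h, h2]
  · subst h2; simp [h]
  · simp [h, h2]

lemma mem_flipc_self {x : X} {c : Finset X} : x ∈ flipc x c ↔ x ∉ c := by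
  rw [mem_flipc]; simp

lemma mem_flipc_ne {a x : X} {c : Finset X} (h : a ≠ x) : a ∈ flipc x c ↔ a ∈ c := by
  rw [mem_flipc]; simp [h]

lemma diffs_flipc (x : X) (c : Finset X) : diffs (flipc x c) c = {x} := by
  ext a
  rw [mem_diffs, Finset.mem_singleton]
  by_cases h : a = x
  · subst h; rw [mem_flipc_self]; tauto
  · rw [mem_flipc_ne h]; tauto

lemma hdist_flipc (x : X) (c : Finset X) : hdist (flipc x c) c = 1 := by
  rw [hdist_eq, diffs_flipc]; simp

lemma hdist_eq_one_iff {c c' : Finset X} : hdist c c' = 1 ↔ ∃ x, c' = flipc x c := by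
  constructor
  · intro h
    rw [hdist_eq, Finset.card_eq_one] at h
    obtain ⟨x, hx⟩ := h
    refine ⟨x, ?_⟩
    ext a
    have hmem : ∀ b : X, b ∈ diffs c c' ↔ b = x := by
      intro b; rw [hx, Finset.mem_singleton]
    by_cases h2 : a = x
    · subst h2
      have := (hmem a).2 rfl
      rw [mem_diffs] at this
      rw [mem_flipc_self]; tauto
    · have : a ∉ diffs c c' := fun hc => h2 ((hmem a).1 hc)
      rw [mem_diffs] at this
      rw [mem_flipc_ne h2]; tauto
  · rintro ⟨x, rfl⟩
    rw [hdist_eq, diffs_comm, diffs_flipc]; simp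

lemma hdist_pos {c c' : Finset X} (h : c ≠ c') : 0 < hdist c c' := by
  rw [hdist_eq, Finset.card_pos, Finset.nonempty_iff_ne_empty]
  intro he; exact h (diffs_eq_empty.1 he)

/-! ### Bridge to Mathlib's shatterer -/

lemma shatters_iff_mathlib {C : Finset (Finset X)} {Y : Finset X} :
    Shatters C Y ↔ Finset.Shatters C Y := by
  constructor
  · intro h t ht
    obtain ⟨c, hc, e⟩ := h t (Finset.mem_powerset.2 ht)
    exact ⟨c, hc, by rw [Finset.inter_comm]; exact e⟩
  · intro h s hs
    obtain ⟨u, hu, e⟩ := h (Finset.mem_powerset.1 hs)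
    exact ⟨u, hu, by rw [Finset.inter_comm]; exact e⟩

lemma mem_shatteredSets {C : Finset (Finset X)} {Y : Finset X} :
    Y ∈ shatteredSets C ↔ Shatters C Y := by
  simp [shatteredSets]

lemma shatteredSets_eq_shatterer (C : Finset (Finset X)) :
    shatteredSets C = C.shatterer := by
  ext Y
  rw [mem_shatteredSets, Finset.mem_shatterer, shatters_iff_mathlib]

lemma pajor (C : Finset (Finset X)) : C.card ≤ (shatteredSets C).card := by
  rw [shatteredSets_eq_shatterer]; exact Finset.card_le_card_shatterer C

lemma shatters_mono {C C' : Finset (Finset X)} {Y : Finset X} (h : C ⊆ C')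
    (hY : Shatters C Y) : Shatters C' Y := by
  rw [shatters_iff_mathlib] at *
  exact Finset.Shatters.mono_left h hY

lemma shatteredSets_mono {C C' : Finset (Finset X)} (h : C ⊆ C') :
    shatteredSets C ⊆ shatteredSets C' := by
  intro Y hY
  rw [mem_shatteredSets] at *
  exact shatters_mono h hY

lemma ample_univ : IsAmple (Finset.univ : Finset (Finset X)) := by
  unfold IsAmple
  congr 1
  symm
  rw [Finset.eq_univ_iff_forall]
  intro Y
  rw [mem_shatteredSets]
  intro s hs
  exact ⟨s, Finset.mem_univ s, by rw [Finset.inter_comm]; exact Finset.inter_eq_right.2 (Finset.mem_powerset.1 hs)⟩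


/-! ### Two-point classes -/

lemma ample_pair {c t : Finset X} (hne : c ≠ t)
    (ha : IsAmple ({c, t} : Finset (Finset X))) : hdist c t = 1 := by
  have hcard : ({c, t} : Finset (Finset X)).card = 2 := by
    rw [Finset.card_insert_of_notMem (by simpa using hne), Finset.card_singleton]
  have hsub : insert (∅ : Finset X) ((diffs c t).image (fun x => ({x} : Finset X)))
      ⊆ shatteredSets ({c, t} : Finset (Finset X)) := by
    intro Y hY
    rw [Finset.mem_insert, Finset.mem_image] at hY
    rw [mem_shatteredSets]
    rcases hY with rfl | ⟨x, hx, rfl⟩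
    · intro s hs
      rw [Finset.mem_powerset, Finset.subset_empty] at hs
      subst hs
      exact ⟨c, by simp, by simp⟩
    · rw [mem_diffs] at hx
      intro s hs
      rw [Finset.mem_powerset] at hs
      rcases Finset.subset_singleton_iff.1 hs with rfl | rfl
      · by_cases hxc : x ∈ c
        · refine ⟨t, by simp, ?_⟩
          rw [Finset.eq_empty_iff_forall_notMem]
          intro a ha2
          rw [Finset.mem_inter, Finset.mem_singleton] at ha2
          obtain ⟨ha3, rfl⟩ := ha2
          tauto
        · refine ⟨c, by simp, ?_⟩
          rw [Finset.eq_empty_iff_forall_notMem]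
          intro a ha2
          rw [Finset.mem_inter, Finset.mem_singleton] at ha2
          obtain ⟨ha3, rfl⟩ := ha2
          tauto
      · by_cases hxc : x ∈ c
        · exact ⟨c, by simp, by ext a; simp; intro h; subst h; tauto⟩
        · have hxt : x ∈ t := by tauto
          exact ⟨t, by simp, by ext a; simp; intro h; subst h; tauto⟩
  have hcard2 : 1 + hdist c t ≤ 2 := by
    have h1 := Finset.card_le_card hsub
    rw [ha] at hcard
    rw [hcard] at h1
    have h2 : (insert (∅ : Finset X) ((diffs c t).image (fun x => ({x} : Finset X)))).card
        = 1 + hdist c t := by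
      rw [Finset.card_insert_of_notMem, Finset.card_image_of_injective _
        (fun a b hab => Finset.singleton_injective hab), hdist_eq, add_comm]
      intro hmem
      rw [Finset.mem_image] at hmem
      obtain ⟨x, _, hx⟩ := hmem
      exact Finset.singleton_ne_empty x hx
    omega
  have := hdist_pos hne
  omega

/-! ### Halfspace lemma -/

lemma ample_halfspace {C : Finset (Finset X)} (hC : IsAmple C) (z : X)
    (p : Finset X → Prop) [DecidablePred p] (hp : ∀ t, p t ↔ z ∈ t) :
    IsAmple (C.filter p) ∧ IsAmple (C.filter (fun t => ¬ p t)) := by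
  classical
  set C1 := C.filter p with hC1
  set C0 := C.filter (fun t => ¬ p t) with hC0
  have hcards : C1.card + C0.card = C.card := Finset.card_filter_add_card_filter_not _
  set s1 := shatteredSets C1 with hs1
  set s0 := shatteredSets C0 with hs0
  -- shattered sets of the halves avoid z and are shattered by C
  have key1 : ∀ Y ∈ s1, z ∉ Y ∧ Y ∈ shatteredSets C := by
    intro Y hY
    rw [hs1, mem_shatteredSets] at hY
    constructor
    · intro hzY
      obtain ⟨d, hd, hdY⟩ := hY ∅ (by simp)
      rw [hC1, Finset.mem_filter] at hd
      have : z ∈ d := (hp d).1 hd.2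
      have : z ∈ d ∩ Y := Finset.mem_inter.2 ⟨this, hzY⟩
      rw [hdY] at this
      simp at this
    · rw [mem_shatteredSets]
      exact shatters_mono (Finset.filter_subset _ _) hY
  have key0 : ∀ Y ∈ s0, z ∉ Y ∧ Y ∈ shatteredSets C := by
    intro Y hY
    rw [hs0, mem_shatteredSets] at hY
    constructor
    · intro hzY
      obtain ⟨d, hd, hdY⟩ := hY Y (by simp)
      rw [hC0, Finset.mem_filter] at hd
      have hzd : z ∉ d := fun h => hd.2 ((hp d).2 h)
      have : Y ⊆ d := by rw [← hdY]; exact Finset.inter_subset_left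
      exact hzd (this hzY)
    · rw [mem_shatteredSets]
      exact shatters_mono (Finset.filter_subset _ _) hY
  -- union bound part
  have hunion : s0 ∪ s1 ⊆ (shatteredSets C).filter (fun Y => z ∉ Y) := by
    intro Y hY
    rw [Finset.mem_union] at hY
    rw [Finset.mem_filter]
    rcases hY with h | h
    · exact ⟨(key0 Y h).2, (key0 Y h).1⟩
    · exact ⟨(key1 Y h).2, (key1 Y h).1⟩
  -- intersection part
  have hinter : (s0 ∩ s1).image (insert z) ⊆ (shatteredSets C).filter (fun Y => z ∈ Y) := by
    intro W hW
    rw [Finset.mem_image] at hW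
    obtain ⟨Y, hY, rfl⟩ := hW
    rw [Finset.mem_inter] at hY
    obtain ⟨hY0, hY1⟩ := hY
    rw [Finset.mem_filter]
    refine ⟨?_, Finset.mem_insert_self z Y⟩
    rw [mem_shatteredSets]
    intro s hs
    rw [Finset.mem_powerset] at hs
    by_cases hzs : z ∈ s
    · have hzY : z ∉ Y := (key1 Y hY1).1
      rw [hs1, mem_shatteredSets] at hY1
      obtain ⟨d, hd, hdY⟩ := hY1 (s.erase z) (by
        rw [Finset.mem_powerset]
        intro a ha
        rw [Finset.mem_erase] at ha
        have := hs ha.2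
        rw [Finset.mem_insert] at this
        tauto)
      rw [hC1, Finset.mem_filter] at hd
      refine ⟨d, hd.1, ?_⟩
      have hzd : z ∈ d := (hp d).1 hd.2
      ext a
      by_cases haz : a = z
      · subst haz; simp [hzd, hzs]
      · rw [Finset.mem_inter, Finset.mem_insert]
        constructor
        · rintro ⟨had, h | haY⟩
          · exact absurd h haz
          · have : a ∈ d ∩ Y := Finset.mem_inter.2 ⟨had, haY⟩
            rw [hdY] at this
            rw [Finset.mem_erase] at this
            exact this.2
        · intro has
          have : a ∈ d ∩ Y := by
            rw [hdY, Finset.mem_erase]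
            exact ⟨haz, has⟩
          rw [Finset.mem_inter] at this
          exact ⟨this.1, Or.inr this.2⟩
    · rw [hs0, mem_shatteredSets] at hY0
      obtain ⟨d, hd, hdY⟩ := hY0 s (by
        rw [Finset.mem_powerset]
        intro a ha
        have := hs ha
        rw [Finset.mem_insert] at this
        rcases this with rfl | h
        · exact absurd ha hzs
        · exact h)
      rw [hC0, Finset.mem_filter] at hd
      refine ⟨d, hd.1, ?_⟩
      have hzd : z ∉ d := fun h => hd.2 ((hp d).2 h)
      rw [← hdY]
      ext a
      rw [Finset.mem_inter, Finset.mem_inter, Finset.mem_insert]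
      constructor
      · rintro ⟨had, rfl | haY⟩
        · exact absurd had hzd
        · exact ⟨had, haY⟩
      · rintro ⟨had, haY⟩
        exact ⟨had, Or.inr haY⟩
  -- injectivity of insert z on z-free sets
  have hinj : ∀ Y ∈ s0 ∩ s1, ∀ Y' ∈ s0 ∩ s1, insert z Y = insert z Y' → Y = Y' := by
    intro Y hY Y' hY' he
    rw [Finset.mem_inter] at hY hY'
    have h1 : z ∉ Y := (key0 Y hY.1).1
    have h2 : z ∉ Y' := (key0 Y' hY'.1).1
    rw [← Finset.erase_insert h1, ← Finset.erase_insert h2, he]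
  have hcardinter : ((s0 ∩ s1).image (insert z)).card = (s0 ∩ s1).card :=
    Finset.card_image_of_injOn hinj
  -- counting
  have hsplit : ((shatteredSets C).filter (fun Y => z ∉ Y)).card
      + ((shatteredSets C).filter (fun Y => z ∈ Y)).card = (shatteredSets C).card := by
    rw [add_comm]
    exact Finset.card_filter_add_card_filter_not _
  have h1 : (s0 ∪ s1).card ≤ ((shatteredSets C).filter (fun Y => z ∉ Y)).card :=
    Finset.card_le_card hunion
  have h2 : (s0 ∩ s1).card ≤ ((shatteredSets C).filter (fun Y => z ∈ Y)).card := by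
    rw [← hcardinter]; exact Finset.card_le_card hinter
  have h3 : s0.card + s1.card = (s0 ∪ s1).card + (s0 ∩ s1).card :=
    (Finset.card_union_add_card_inter s0 s1).symm
  have p0 := pajor C0
  have p1 := pajor C1
  rw [← hs0] at p0
  rw [← hs1] at p1
  have hCa : C.card = (shatteredSets C).card := hC
  constructor
  · show C1.card = (shatteredSets C1).card
    rw [← hs1]; omega
  · show C0.card = (shatteredSets C0).card
    rw [← hs0]; omega

/-- The elements of `C` agreeing with `c` at coordinate `z` form an ample subclass. -/
lemma ample_agree {C : Finset (Finset X)} (hC : IsAmple C) (c : Finset X) (z : X) :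
    IsAmple (C.filter (fun t => z ∈ t ↔ z ∈ c)) := by
  classical
  by_cases hzc : z ∈ c
  · have := (ample_halfspace hC z (fun t => z ∈ t) (fun t => Iff.rfl)).1
    have he : C.filter (fun t => z ∈ t ↔ z ∈ c) = C.filter (fun t => z ∈ t) := by
      apply Finset.filter_congr
      intro t _
      simp [hzc]
    rwa [he]
  · have := (ample_halfspace hC z (fun t => z ∈ t) (fun t => Iff.rfl)).2
    have he : C.filter (fun t => z ∈ t ↔ z ∈ c) = C.filter (fun t => ¬ z ∈ t) := by
      apply Finset.filter_congr
      intro t _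
      simp [hzc]
    rwa [he]

/-! ### Connectivity of ample classes -/

/-- In an ample class of size ≥ 2, every concept has a neighbor. -/
lemma neighbor_exists : ∀ (n : ℕ) (C : Finset (Finset X)), C.card = n → IsAmple C →
    ∀ c ∈ C, 2 ≤ C.card → ∃ x, flipc x c ∈ C := by
  intro n
  induction n using Nat.strong_induction_on with
  | _ n ih =>
    intro C hn hC c hc h2
    classical
    by_cases hsplit : ∃ z : X, C.filter (fun t => z ∈ t ↔ z ∈ c) ≠ C ∧
        2 ≤ (C.filter (fun t => z ∈ t ↔ z ∈ c)).card
    · obtain ⟨z, hne, hge⟩ := hsplit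
      set A := C.filter (fun t => z ∈ t ↔ z ∈ c) with hA
      have hsub : A ⊆ C := Finset.filter_subset _ _
      have hlt : A.card < n := by
        rw [← hn]
        exact Finset.card_lt_card (Finset.ssubset_iff_subset_ne.2 ⟨hsub, hne⟩)
      have hcA : c ∈ A := Finset.mem_filter.2 ⟨hc, Iff.rfl⟩
      obtain ⟨x, hx⟩ := ih A.card hlt A rfl (ample_agree hC c z) c hcA hge
      exact ⟨x, hsub hx⟩
    · push_neg at hsplit
      -- every agreement class is all of C or just {c}
      have hAcases : ∀ z : X, C.filter (fun t => z ∈ t ↔ z ∈ c) = C ∨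
          C.filter (fun t => z ∈ t ↔ z ∈ c) = {c} := by
        intro z
        by_cases h : C.filter (fun t => z ∈ t ↔ z ∈ c) = C
        · exact Or.inl h
        · right
          have := hsplit z h
          have hcA : c ∈ C.filter (fun t => z ∈ t ↔ z ∈ c) :=
            Finset.mem_filter.2 ⟨hc, Iff.rfl⟩
          have h1 : (C.filter (fun t => z ∈ t ↔ z ∈ c)).card = 1 := by
            have : 1 ≤ (C.filter (fun t => z ∈ t ↔ z ∈ c)).card :=
              Finset.card_pos.2 ⟨c, hcA⟩
            omega
          rw [Finset.card_eq_one] at h1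
          obtain ⟨a, ha⟩ := h1
          rw [ha] at hcA
          rw [Finset.mem_singleton] at hcA
          rw [ha, hcA]
      obtain ⟨t, ht, htc⟩ := Finset.exists_mem_ne h2 c
      -- every t' ≠ c in C has the same membership pattern as t
      have hpat : ∀ t' ∈ C, t' ≠ c → t' = t := by
        intro t' ht' ht'c
        ext a
        rcases hAcases a with h | h
        · have h1 : t' ∈ C.filter (fun s => a ∈ s ↔ a ∈ c) := by rw [h]; exact ht'
          have h2' : t ∈ C.filter (fun s => a ∈ s ↔ a ∈ c) := by rw [h]; exact ht
          rw [Finset.mem_filter] at h1 h2'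
          rw [h1.2, h2'.2]
        · have h1 : t' ∉ C.filter (fun s => a ∈ s ↔ a ∈ c) := by
            rw [h, Finset.mem_singleton]; exact ht'c
          have h2' : t ∉ C.filter (fun s => a ∈ s ↔ a ∈ c) := by
            rw [h, Finset.mem_singleton]; exact htc
          rw [Finset.mem_filter] at h1 h2'
          have e1 : ¬(a ∈ t' ↔ a ∈ c) := fun hh => h1 ⟨ht', hh⟩
          have e2 : ¬(a ∈ t ↔ a ∈ c) := fun hh => h2' ⟨ht, hh⟩
          by_cases hac : a ∈ c
          · simp [hac] at e1 e2; simp [e1, e2]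
          · simp [hac] at e1 e2; simp [e1, e2]
      have hCeq : C = {c, t} := by
        ext u
        rw [Finset.mem_insert, Finset.mem_singleton]
        constructor
        · intro hu
          by_cases huc : u = c
          · exact Or.inl huc
          · exact Or.inr (hpat u hu huc)
        · rintro (rfl | rfl) <;> assumption
      have hd : hdist c t = 1 := by
        apply ample_pair (Ne.symm htc)
        rw [← hCeq]; exact hC
      obtain ⟨x, hx⟩ := hdist_eq_one_iff.1 hd
      exact ⟨x, by rw [← hx]; exact ht⟩

/-- Geodesic first step: in an ample class there is a neighbor of `c` towards `c'`. -/
lemma geodesic_step : ∀ (n : ℕ) (C : Finset (Finset X)), C.card = n → IsAmple C →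
    ∀ c ∈ C, ∀ c' ∈ C, c ≠ c' → ∃ x ∈ diffs c c', flipc x c ∈ C := by
  intro n
  induction n using Nat.strong_induction_on with
  | _ n ih =>
    intro C hn hC c hc c' hc' hne
    classical
    by_cases hsplit : ∃ z : X, z ∉ diffs c c' ∧ C.filter (fun t => z ∈ t ↔ z ∈ c) ≠ C
    · obtain ⟨z, hz, hneq⟩ := hsplit
      set A := C.filter (fun t => z ∈ t ↔ z ∈ c) with hA
      have hsub : A ⊆ C := Finset.filter_subset _ _
      have hlt : A.card < n := by
        rw [← hn]
        exact Finset.card_lt_card (Finset.ssubset_iff_subset_ne.2 ⟨hsub, hneq⟩)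
      have hcA : c ∈ A := Finset.mem_filter.2 ⟨hc, Iff.rfl⟩
      have hc'A : c' ∈ A := by
        rw [mem_diffs] at hz
        push_neg at hz
        exact Finset.mem_filter.2 ⟨hc', by tauto⟩
      obtain ⟨x, hx1, hx2⟩ := ih A.card hlt A rfl (ample_agree hC c z) c hcA c' hc'A hne
      exact ⟨x, hx1, hsub hx2⟩
    · push_neg at hsplit
      have h2 : 2 ≤ C.card := Finset.one_lt_card.2 ⟨c, hc, c', hc', hne⟩
      obtain ⟨x, hx⟩ := neighbor_exists n C hn hC c hc h2
      refine ⟨x, ?_, hx⟩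
      by_contra hxd
      have hA := hsplit x hxd
      have : flipc x c ∈ C.filter (fun t => x ∈ t ↔ x ∈ c) := by rw [hA]; exact hx
      rw [Finset.mem_filter] at this
      have := this.2
      rw [mem_flipc_self] at this
      tauto

/-! ### Cubes and corners -/

/-- The set of coordinates `x` such that the flip of `c` at `x` lies in `C`. -/
def nbrs (C : Finset (Finset X)) (c : Finset X) : Finset X :=
  Finset.univ.filter (fun x => flipc x c ∈ C)

lemma mem_nbrs {C : Finset (Finset X)} {c : Finset X} {x : X} :
    x ∈ nbrs C c ↔ flipc x c ∈ C := by simp [nbrs]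

lemma mem_cube_iff {t Y u : Finset X} (ht : t ∩ Y = ∅) :
    u ∈ Y.powerset.image (fun s => t ∪ s) ↔ ∀ a ∉ Y, (a ∈ u ↔ a ∈ t) := by
  have htY : ∀ a, a ∈ t → a ∉ Y → True := fun _ _ _ => trivial
  have hdisj : ∀ a, a ∈ t → a ∈ Y → False := by
    intro a h1 h2
    have : a ∈ t ∩ Y := Finset.mem_inter.2 ⟨h1, h2⟩
    rw [ht] at this; simp at this
  constructor
  · rintro hu a ha
    rw [Finset.mem_image] at hu
    obtain ⟨s, hs, rfl⟩ := hu
    rw [Finset.mem_powerset] at hs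
    rw [Finset.mem_union]
    constructor
    · rintro (h | h)
      · exact h
      · exact absurd (hs h) ha
    · exact Or.inl
  · intro h
    rw [Finset.mem_image]
    refine ⟨u ∩ Y, Finset.mem_powerset.2 Finset.inter_subset_right, ?_⟩
    ext a
    rw [Finset.mem_union, Finset.mem_inter]
    by_cases haY : a ∈ Y
    · constructor
      · rintro (h1 | h1)
        · exact absurd haY (fun hh => hdisj a h1 hh)
        · exact h1.1
      · intro h1; exact Or.inr ⟨h1, haY⟩
    · have := h a haY
      tauto

lemma mem_cubeAt {c Y u : Finset X} :
    u ∈ cubeAt c Y ↔ ∀ a ∉ Y, (a ∈ u ↔ a ∈ c) := by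
  unfold cubeAt
  rw [mem_cube_iff (Finset.sdiff_inter_self Y c)]
  constructor
  · intro h a ha
    rw [h a ha, Finset.mem_sdiff]
    tauto
  · intro h a ha
    rw [h a ha, Finset.mem_sdiff]
    tauto

lemma self_mem_cubeAt {c Y : Finset X} : c ∈ cubeAt c Y :=
  mem_cubeAt.2 (fun _ _ => Iff.rfl)

lemma cubeAt_isCubeS (c Y : Finset X) : IsCubeS (cubeAt c Y) Y :=
  ⟨c \ Y, Finset.sdiff_inter_self Y c, rfl⟩

lemma isCubeS_eq_cubeAt {B : Finset (Finset X)} {Y c : Finset X}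
    (hB : IsCubeS B Y) (hc : c ∈ B) : B = cubeAt c Y := by
  obtain ⟨t, htY, rfl⟩ := hB
  have hcmem := (mem_cube_iff htY).1 hc
  ext u
  rw [mem_cube_iff htY, mem_cubeAt]
  constructor
  · intro h a ha
    rw [h a ha, ← hcmem a ha]
  · intro h a ha
    rw [h a ha, hcmem a ha]

lemma cubeAt_mono {c : Finset X} {Y Y' : Finset X} (h : Y ⊆ Y') :
    cubeAt c Y ⊆ cubeAt c Y' := by
  intro u hu
  rw [mem_cubeAt] at *
  intro a ha
  exact hu a (fun h2 => ha (h h2))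

lemma flipc_mem_cubeAt {c Y : Finset X} {x : X} :
    flipc x c ∈ cubeAt c Y ↔ x ∈ Y := by
  rw [mem_cubeAt]
  constructor
  · intro h
    by_contra hx
    have := h x hx
    rw [mem_flipc_self] at this
    tauto
  · intro hx a ha
    have : a ≠ x := fun hh => ha (hh ▸ hx)
    exact mem_flipc_ne this

lemma cubeAt_shatters {C : Finset (Finset X)} {c Y : Finset X}
    (h : cubeAt c Y ⊆ C) : Shatters C Y := by
  intro s hs
  rw [Finset.mem_powerset] at hs
  refine ⟨(c \ Y) ∪ s, h ?_, ?_⟩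
  · unfold cubeAt
    rw [Finset.mem_image]
    exact ⟨s, Finset.mem_powerset.2 hs, rfl⟩
  · ext a
    rw [Finset.mem_inter, Finset.mem_union, Finset.mem_sdiff]
    constructor
    · rintro ⟨h1 | h1, h2⟩
      · exact absurd h2 h1.2
      · exact h1
    · intro h1
      exact ⟨Or.inr h1, hs h1⟩

lemma exists_maximal_cube {C B₀ : Finset (Finset X)} (h : IsCubeOf C B₀) :
    ∃ B, IsMaximalCubeOf C B ∧ B₀ ⊆ B := by
  classical
  set CS := C.powerset.filter (fun B => IsCubeOf C B ∧ B₀ ⊆ B) with hCS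
  have hne : CS.Nonempty := ⟨B₀, Finset.mem_filter.2 ⟨Finset.mem_powerset.2 h.1, h, le_refl B₀⟩⟩
  obtain ⟨B, hBmem, hBmax⟩ := Finset.exists_max_image CS Finset.card hne
  rw [hCS, Finset.mem_filter] at hBmem
  refine ⟨B, ⟨hBmem.2.1, ?_⟩, hBmem.2.2⟩
  intro B' hB' hsub
  have hB'mem : B' ∈ CS := Finset.mem_filter.2
    ⟨Finset.mem_powerset.2 hB'.1, hB', hBmem.2.2.trans hsub⟩
  exact Finset.eq_of_subset_of_card_le hsub (hBmax B' hB'mem)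

lemma cubeAt_singleton (c : Finset X) (x : X) :
    cubeAt c {x} = {c, flipc x c} := by
  ext u
  rw [mem_cubeAt, Finset.mem_insert, Finset.mem_singleton]
  constructor
  · intro h
    by_cases hx : x ∈ u ↔ x ∈ c
    · left
      ext a
      by_cases ha : a = x
      · subst ha; exact hx
      · exact h a (by simpa using ha)
    · right
      ext a
      by_cases ha : a = x
      · subst ha; rw [mem_flipc_self]; tauto
      · rw [mem_flipc_ne ha]; exact h a (by simpa using ha)
  · rintro (rfl | rfl)
    · exact fun _ _ => Iff.rfl
    · intro a ha
      exact mem_flipc_ne (by simpa using ha)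

lemma corner_of_cube {C : Finset (Finset X)} {c : Finset X} (hc : c ∈ C)
    (h : cubeAt c (nbrs C c) ⊆ C) : IsCornerOf C c := by
  refine ⟨hc, cubeAt c (nbrs C c), ⟨⟨⟨h, nbrs C c, cubeAt_isCubeS c _⟩, ?_⟩, self_mem_cubeAt⟩, ?_⟩
  · -- maximality
    intro B' hB' hsub
    obtain ⟨hB'C, Y', hY'⟩ := hB'
    have hcB' : c ∈ B' := hsub self_mem_cubeAt
    have hB'eq : B' = cubeAt c Y' := isCubeS_eq_cubeAt hY' hcB'
    have hY'sub : Y' ⊆ nbrs C c := by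
      intro y hy
      rw [mem_nbrs]
      apply hB'C
      rw [hB'eq]
      exact flipc_mem_cubeAt.2 hy
    apply Finset.Subset.antisymm hsub
    rw [hB'eq]
    exact cubeAt_mono hY'sub
  · -- uniqueness
    rintro B ⟨⟨⟨hBC, Y, hY⟩, hBmax⟩, hcB⟩
    have hBeq : B = cubeAt c Y := isCubeS_eq_cubeAt hY hcB
    have hYsub : Y ⊆ nbrs C c := by
      intro y hy
      rw [mem_nbrs]
      apply hBC
      rw [hBeq]
      exact flipc_mem_cubeAt.2 hy
    have hsub : B ⊆ cubeAt c (nbrs C c) := by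
      rw [hBeq]; exact cubeAt_mono hYsub
    exact hBmax _ ⟨h, nbrs C c, cubeAt_isCubeS c _⟩ hsub

lemma corner_nbrs_cube {C : Finset (Finset X)} {c : Finset X}
    (h : IsCornerOf C c) : cubeAt c (nbrs C c) ⊆ C := by
  obtain ⟨hc, B, ⟨⟨⟨hBC, Y, hY⟩, hBmax⟩, hcB⟩, huniq⟩ := h
  have hBeq : B = cubeAt c Y := isCubeS_eq_cubeAt hY hcB
  have hnbrs : nbrs C c ⊆ Y := by
    intro x hx
    rw [mem_nbrs] at hx
    -- the edge {c, flipc x c} is a cube of C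
    have hedge : IsCubeOf C (cubeAt c {x}) := by
      refine ⟨?_, {x}, cubeAt_isCubeS c _⟩
      rw [cubeAt_singleton]
      intro u hu
      rw [Finset.mem_insert, Finset.mem_singleton] at hu
      rcases hu with rfl | rfl <;> assumption
    obtain ⟨M, hMmax, hMsup⟩ := exists_maximal_cube hedge
    have hcM : c ∈ M := hMsup (by rw [cubeAt_singleton]; simp)
    have hMB : M = B := huniq M ⟨hMmax, hcM⟩
    have : flipc x c ∈ B := by
      rw [← hMB]
      exact hMsup (by rw [cubeAt_singleton]; simp)
    rw [hBeq] at this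
    exact flipc_mem_cubeAt.1 this
  calc cubeAt c (nbrs C c) ⊆ cubeAt c Y := cubeAt_mono hnbrs
    _ = B := hBeq.symm
    _ ⊆ C := hBC

/-- Removing a corner from an ample class keeps it ample. -/
lemma peel_corner_ample {C : Finset (Finset X)} {c : Finset X}
    (hC : IsAmple C) (h : IsCornerOf C c) : IsAmple (C.erase c) := by
  classical
  have hc : c ∈ C := h.1
  set Z := nbrs C c with hZ
  have hcube : cubeAt c Z ⊆ C := corner_nbrs_cube h
  -- c is the unique realizer of its trace on Z
  have huniq : ∀ t ∈ C, t ∩ Z = c ∩ Z → t = c := by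
    intro t ht htr
    by_contra hne
    obtain ⟨x, hx1, hx2⟩ := geodesic_step C.card C rfl hC c hc t ht (Ne.symm hne)
    have hxZ : x ∈ Z := by rw [hZ, mem_nbrs]; exact hx2
    rw [mem_diffs] at hx1
    apply hx1
    have h1 : x ∈ t ∩ Z ↔ x ∈ c ∩ Z := by rw [htr]
    rw [Finset.mem_inter, Finset.mem_inter] at h1
    constructor
    · intro hxc; exact (h1.2 ⟨hxc, hxZ⟩).1
    · intro hxt; exact (h1.1 ⟨hxt, hxZ⟩).1
  have hZsh : Z ∈ shatteredSets C := mem_shatteredSets.2 (cubeAt_shatters hcube)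
  have hZnot : Z ∉ shatteredSets (C.erase c) := by
    rw [mem_shatteredSets]
    intro hsh
    obtain ⟨d, hd, hdZ⟩ := hsh (c ∩ Z) (Finset.mem_powerset.2 Finset.inter_subset_right)
    have hdC : d ∈ C := Finset.mem_of_mem_erase hd
    have := huniq d hdC hdZ
    exact (Finset.ne_of_mem_erase hd) this
  have hsub : shatteredSets (C.erase c) ⊆ (shatteredSets C).erase Z := by
    intro Y hY
    rw [Finset.mem_erase]
    refine ⟨fun hh => hZnot (hh ▸ hY), shatteredSets_mono (Finset.erase_subset _ _) hY⟩
  have h1 : (shatteredSets (C.erase c)).card ≤ (shatteredSets C).card - 1 := by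
    have := Finset.card_le_card hsub
    rw [Finset.card_erase_of_mem hZsh] at this
    exact this
  have h2 := pajor (C.erase c)
  have h3 : (C.erase c).card = C.card - 1 := Finset.card_erase_of_mem hc
  have h4 : 1 ≤ C.card := Finset.card_pos.2 ⟨c, hc⟩
  have hCa : C.card = (shatteredSets C).card := hC
  show (C.erase c).card = (shatteredSets (C.erase c)).card
  omega

/-! ### Facets of the cross-polytope -/

lemma mem_facet_inl {c : Finset X} {x : X} : Sum.inl x ∈ facet c ↔ x ∈ c := by
  simp [facet]

lemma mem_facet_inr {c : Finset X} {x : X} : Sum.inr x ∈ facet c ↔ x ∉ c := by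
  simp [facet]

lemma facet_injective : Function.Injective (facet (X := X)) := by
  intro c c' h
  ext x
  rw [← mem_facet_inl (c := c), ← mem_facet_inl (c := c'), h]

lemma facet_inter_eq (c c' : Finset X) :
    facet c ∩ facet c' =
      (c ∩ c').image Sum.inl ∪ ((Finset.univ \ (c ∪ c')).image Sum.inr) := by
  ext a
  cases a <;>
    simp [facet, Finset.mem_union, Finset.mem_inter, Finset.mem_sdiff]

lemma card_facet_inter (c c' : Finset X) :
    (facet c ∩ facet c').card + hdist c c' = Fintype.card X := by
  rw [facet_inter_eq]
  have hdisj : Disjoint ((c ∩ c').image (Sum.inl : X → X ⊕ X))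
      ((Finset.univ \ (c ∪ c')).image Sum.inr) := by
    rw [Finset.disjoint_left]
    rintro a ha hb
    rw [Finset.mem_image] at ha hb
    obtain ⟨y, _, rfl⟩ := ha
    obtain ⟨y', _, he⟩ := hb
    cases he
  rw [Finset.card_union_of_disjoint hdisj,
    Finset.card_image_of_injective _ Sum.inl_injective,
    Finset.card_image_of_injective _ Sum.inr_injective,
    Finset.card_sdiff_of_subset (Finset.subset_univ _), Finset.card_univ]
  have h1 : ((c ∩ c') ∪ diffs c c') = c ∪ c' := by
    ext a
    simp only [Finset.mem_union, Finset.mem_inter, mem_diffs]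
    tauto
  have h2 : Disjoint (c ∩ c') (diffs c c') := by
    rw [Finset.disjoint_left]
    intro a ha hd
    rw [Finset.mem_inter] at ha
    rw [mem_diffs] at hd
    tauto
  have h3 : (c ∩ c').card + (diffs c c').card = (c ∪ c').card := by
    rw [← Finset.card_union_of_disjoint h2, h1]
  have h4 : (c ∪ c').card ≤ Fintype.card X := Finset.card_le_univ _
  rw [hdist_eq]
  omega

lemma facet_inter_subset_iff (ci cj ck : Finset X) :
    facet ci ∩ facet cj ⊆ facet ck ∩ facet cj ↔ diffs ck cj ⊆ diffs ci cj := by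
  constructor
  · intro h x hx
    rw [mem_diffs] at hx ⊢
    intro hagree
    apply hx
    by_cases hj : x ∈ cj
    · have hi : x ∈ ci := hagree.2 hj
      have : Sum.inl x ∈ facet ck ∩ facet cj := h (by
        rw [Finset.mem_inter, mem_facet_inl, mem_facet_inl]; exact ⟨hi, hj⟩)
      rw [Finset.mem_inter, mem_facet_inl] at this
      tauto
    · have hi : x ∉ ci := fun hh => hj (hagree.1 hh)
      have : Sum.inr x ∈ facet ck ∩ facet cj := h (by
        rw [Finset.mem_inter, mem_facet_inr, mem_facet_inr]; exact ⟨hi, hj⟩)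
      rw [Finset.mem_inter, mem_facet_inr] at this
      tauto
  · intro h a ha
    rw [Finset.mem_inter] at ha ⊢
    cases a with
    | inl x =>
      simp only [mem_facet_inl] at ha ⊢
      refine ⟨?_, ha.2⟩
      have hnd : x ∉ diffs ci cj := by
        rw [mem_diffs]; push_neg; constructor <;> intro <;> tauto
      have : x ∉ diffs ck cj := fun hh => hnd (h hh)
      rw [mem_diffs] at this
      push_neg at this
      exact this.2 ha.2
    | inr x =>
      simp only [mem_facet_inr] at ha ⊢
      refine ⟨?_, ha.2⟩
      have hnd : x ∉ diffs ci cj := by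
        rw [mem_diffs]; push_neg; constructor <;> intro <;> tauto
      have : x ∉ diffs ck cj := fun hh => hnd (h hh)
      rw [mem_diffs] at this
      push_neg at this
      intro hk
      exact ha.2 (this.1 hk)

/-! ### Translating partial shellings -/

lemma map_facet_getD (l : List (Finset X)) {j : ℕ} (hj : j < l.length) :
    (l.map facet).getD j ∅ = facet (l.getD j ∅) := by
  rw [List.getD_eq_getElem _ _ (by simpa using hj), List.getD_eq_getElem _ _ hj,
    List.getElem_map]

lemma shelling_iff (l : List (Finset X)) :
    IsPartialShelling (l.map facet) ↔ (l.Nodup ∧ ∀ i j, i < j → j < l.length →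
      ∃ k < j, hdist (l.getD k ∅) (l.getD j ∅) = 1 ∧
        diffs (l.getD k ∅) (l.getD j ∅) ⊆ diffs (l.getD i ∅) (l.getD j ∅)) := by
  unfold IsPartialShelling
  rw [List.nodup_map_iff facet_injective, List.length_map]
  constructor
  · rintro ⟨hnd, hcond⟩
    refine ⟨hnd, ?_⟩
    intro i j hij hj
    obtain ⟨k, hk, hcard, hsub⟩ := hcond i j hij hj
    have hkl : k < l.length := hk.trans hj
    have hil : i < l.length := hij.trans hj
    rw [map_facet_getD l hkl, map_facet_getD l hj] at hcard
    rw [map_facet_getD l hkl, map_facet_getD l hj, map_facet_getD l hil] at hsub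
    -- the list entries are distinct
    have hne : l.getD i ∅ ≠ l.getD j ∅ := by
      rw [List.getD_eq_getElem _ _ hil, List.getD_eq_getElem _ _ hj]
      intro he
      have := List.Nodup.getElem_inj_iff hnd |>.1 he
      omega
    have hpos := hdist_pos hne
    have hle : hdist (l.getD i ∅) (l.getD j ∅) ≤ Fintype.card X := by
      rw [hdist_eq]
      exact (Finset.card_le_univ _).trans (le_of_eq (Finset.card_univ))
    have hci := card_facet_inter (l.getD i ∅) (l.getD j ∅)
    have hck := card_facet_inter (l.getD k ∅) (l.getD j ∅)
    refine ⟨k, hk, ?_, (facet_inter_subset_iff _ _ _).1 hsub⟩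
    omega
  · rintro ⟨hnd, hcond⟩
    refine ⟨hnd, ?_⟩
    intro i j hij hj
    obtain ⟨k, hk, hcard, hsub⟩ := hcond i j hij hj
    have hkl : k < l.length := hk.trans hj
    have hil : i < l.length := hij.trans hj
    refine ⟨k, hk, ?_, ?_⟩
    · rw [map_facet_getD l hkl, map_facet_getD l hj]
      have hck := card_facet_inter (l.getD k ∅) (l.getD j ∅)
      have hxne : 1 ≤ Fintype.card X := by
        rw [hdist_eq, Finset.card_eq_one] at hcard
        obtain ⟨x, _⟩ := hcard
        exact Fintype.card_pos_iff.2 ⟨x⟩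
      omega
    · rw [map_facet_getD l hkl, map_facet_getD l hj, map_facet_getD l hil]
      exact (facet_inter_subset_iff _ _ _).2 hsub

/-! ### Shellings and corners of the complement -/

lemma hdist_comm (c c' : Finset X) : hdist c c' = hdist c' c := by
  rw [hdist_eq, hdist_eq, diffs_comm]

lemma mem_take_iff {l : List (Finset X)} {j : ℕ} {t : Finset X} :
    t ∈ (l.take j).toFinset ↔ ∃ i, i < j ∧ i < l.length ∧ l.getD i ∅ = t := by
  rw [List.mem_toFinset, List.mem_iff_getElem]
  constructor
  · rintro ⟨i, hi, he⟩
    have hi' := hi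
    rw [List.length_take] at hi'
    have h1 : i < j := lt_of_lt_of_le hi' (min_le_left _ _)
    have h2 : i < l.length := lt_of_lt_of_le hi' (min_le_right _ _)
    refine ⟨i, h1, h2, ?_⟩
    rw [List.getD_eq_getElem _ _ h2, ← he, List.getElem_take]
  · rintro ⟨i, h1, h2, he⟩
    have hlen : i < (l.take j).length := by
      rw [List.length_take]; exact lt_min h1 h2
    refine ⟨i, hlen, ?_⟩
    rw [List.getElem_take, ← List.getD_eq_getElem l ∅ h2, he]

lemma getD_ne_of_nodup {l : List (Finset X)} (hnd : l.Nodup) {i j : ℕ}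
    (hi : i < l.length) (hj : j < l.length) (hne : i ≠ j) :
    l.getD i ∅ ≠ l.getD j ∅ := by
  rw [List.getD_eq_getElem _ _ hi, List.getD_eq_getElem _ _ hj]
  intro he
  exact hne ((List.Nodup.getElem_inj_iff hnd).1 he)

lemma shelling_corner (l : List (Finset X)) (hl : IsPartialShelling (l.map facet))
    {j : ℕ} (hj : j < l.length) :
    IsCornerOf (Finset.univ \ (l.take j).toFinset) (l.getD j ∅) := by
  obtain ⟨hnd, hcond⟩ := (shelling_iff l).1 hl
  set D := Finset.univ \ (l.take j).toFinset with hD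
  set c := l.getD j ∅ with hc
  have hcD : c ∈ D := by
    rw [hD, Finset.mem_sdiff]
    refine ⟨Finset.mem_univ _, ?_⟩
    intro hmem
    rw [mem_take_iff] at hmem
    obtain ⟨i, h1, h2, he⟩ := hmem
    exact getD_ne_of_nodup hnd h2 hj (Nat.ne_of_lt h1) he
  apply corner_of_cube hcD
  intro t ht
  rw [hD, Finset.mem_sdiff]
  refine ⟨Finset.mem_univ _, ?_⟩
  intro htS
  rw [mem_take_iff] at htS
  obtain ⟨i, hij, hil, hit⟩ := htS
  obtain ⟨k, hk, hd1, hdsub⟩ := hcond i j hij hj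
  have hkl : k < l.length := hk.trans hj
  rw [hdist_comm] at hd1
  obtain ⟨x, hx⟩ := hdist_eq_one_iff.1 hd1
  have hdiffk : diffs (l.getD k ∅) c = {x} := by
    rw [hx, ← hc, diffs_flipc]
  have hxdiff : x ∈ diffs t c := by
    rw [← hit]
    apply hdsub
    rw [hdiffk]
    exact Finset.mem_singleton_self x
  have hknD : flipc x c ∉ D := by
    rw [← hx, hD, Finset.mem_sdiff]
    intro hh
    exact hh.2 (mem_take_iff.2 ⟨k, hk, hkl, rfl⟩)
  have hxn : x ∉ nbrs D c := fun hh => hknD (mem_nbrs.1 hh)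
  have := mem_cubeAt.1 ht x hxn
  rw [mem_diffs] at hxdiff
  exact hxdiff this

lemma compl_insert (S : Finset (Finset X)) (a : Finset X) :
    Finset.univ \ (insert a S) = (Finset.univ \ S).erase a := by
  ext t
  simp only [Finset.mem_sdiff, Finset.mem_insert, Finset.mem_erase, Finset.mem_univ,
    true_and]
  tauto

lemma take_succ_toFinset {l : List (Finset X)} {j : ℕ} (hj : j < l.length) :
    (l.take (j + 1)).toFinset = insert (l.getD j ∅) (l.take j).toFinset := by
  rw [← List.take_concat_get' l j hj, List.toFinset_append, List.getD_eq_getElem l ∅ hj]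
  ext u
  simp [or_comm]

lemma shelling_compl_ample (l : List (Finset X)) (hl : IsPartialShelling (l.map facet)) :
    ∀ j, j ≤ l.length → IsAmple (Finset.univ \ (l.take j).toFinset) := by
  intro j
  induction j with
  | zero => intro _; simpa using ample_univ
  | succ j ih =>
    intro hj
    have hjl : j < l.length := hj
    have h1 := peel_corner_ample (ih (le_of_lt hjl)) (shelling_corner l hl hjl)
    rwa [take_succ_toFinset hjl, compl_insert]

lemma append_corner (l : List (Finset X)) (hl : IsPartialShelling (l.map facet))
    (c : Finset X) (hc : IsCornerOf (Finset.univ \ l.toFinset) c) :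
    IsPartialShelling ((l ++ [c]).map facet) := by
  obtain ⟨hnd, hcond⟩ := (shelling_iff l).1 hl
  have hcD : c ∉ l.toFinset := by
    have := hc.1
    rw [Finset.mem_sdiff] at this
    exact this.2
  rw [shelling_iff]
  constructor
  · rw [List.nodup_append]
    exact ⟨hnd, List.nodup_singleton c, by
      intro a ha b hb
      rw [List.mem_singleton] at hb
      subst hb
      intro hac
      subst hac
      exact hcD (List.mem_toFinset.2 ha)⟩
  · intro i j hij hj
    rw [List.length_append, List.length_singleton] at hj
    have hgete : ∀ m, m < l.length → (l ++ [c]).getD m ∅ = l.getD m ∅ := by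
      intro m hm
      exact List.getD_append l [c] ∅ m hm
    by_cases hjl : j < l.length
    · obtain ⟨k, hk, h1, h2⟩ := hcond i j hij hjl
      have hkl : k < l.length := hk.trans hjl
      have hil : i < l.length := hij.trans hjl
      refine ⟨k, hk, ?_, ?_⟩
      · rwa [hgete k hkl, hgete j hjl]
      · rwa [hgete k hkl, hgete j hjl, hgete i hil]
    · have hjeq : j = l.length := by omega
      subst hjeq
      have hgc : (l ++ [c]).getD l.length ∅ = c := by
        rw [List.getD_eq_getElem _ _ (by simp)]
        simp
      have hil : i < l.length := by omega
      set t := l.getD i ∅ with hti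
      have htl : t ∈ l.toFinset := by
        rw [List.mem_toFinset, List.mem_iff_getElem]
        exact ⟨i, hil, (List.getD_eq_getElem l ∅ hil).symm⟩
      have htD : t ∉ Finset.univ \ l.toFinset := by
        rw [Finset.mem_sdiff]
        intro hh
        exact hh.2 htl
      have hcube := corner_nbrs_cube hc
      have htc : t ∉ cubeAt c (nbrs (Finset.univ \ l.toFinset) c) :=
        fun hh => htD (hcube hh)
      rw [mem_cubeAt] at htc
      push_neg at htc
      obtain ⟨x, hxn, hxd⟩ := htc
      have hfl : flipc x c ∈ l.toFinset := by
        rw [mem_nbrs] at hxn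
        by_contra hh
        exact hxn (Finset.mem_sdiff.2 ⟨Finset.mem_univ _, hh⟩)
      rw [List.mem_toFinset, List.mem_iff_getElem] at hfl
      obtain ⟨k, hkl, hke⟩ := hfl
      refine ⟨k, by omega, ?_, ?_⟩
      · rw [hgete k hkl, hgc, List.getD_eq_getElem _ _ hkl, hke, hdist_flipc]
      · rw [hgete k hkl, hgc, hgete i hil, List.getD_eq_getElem _ _ hkl, hke, ← hti,
          diffs_flipc]
        intro a ha
        rw [Finset.mem_singleton] at ha
        subst ha
        rw [mem_diffs]
        tauto

end Stmt7Aux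


/-- If every ample concept class admits a corner peeling, then every
cross-polytope is extendably shellable: every partial shelling extends to a partial
shelling containing all `2^n` facets. -/
theorem stmt_7
    (hpeel : ∀ (k : ℕ) (C : Finset (Finset (Fin k))), IsAmple C → Dismantlable C) :
    ∀ (n : ℕ) (l : List (Finset (Fin n))), IsPartialShelling (l.map facet) →
      ∃ l' : List (Finset (Fin n)), l.IsPrefix l' ∧
        IsPartialShelling (l'.map facet) ∧ l'.length = 2 ^ n := by
  intro n l hl
  classical
  have hnd : l.Nodup := ((Stmt7Aux.shelling_iff l).1 hl).1
  have hample := Stmt7Aux.shelling_compl_ample l hl l.length (le_refl _)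
  rw [List.take_length] at hample
  obtain ⟨L, hLfin, hLnd, hLpeel⟩ := hpeel n (Finset.univ \ l.toFinset) hample
  have main : ∀ d, d ≤ L.length →
      IsPartialShelling ((l ++ (L.drop (L.length - d)).reverse).map facet) ∧
      Finset.univ \ (l ++ (L.drop (L.length - d)).reverse).toFinset
        = (L.take (L.length - d)).toFinset := by
    intro d
    induction d with
    | zero =>
      intro _
      simp only [Nat.sub_zero, List.drop_length, List.reverse_nil, List.append_nil]
      exact ⟨hl, by rw [List.take_length, hLfin]⟩
    | succ d ih =>
      intro hd
      obtain ⟨ih1, ih2⟩ := ih (by omega)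
      have htL : L.length - (d+1) < L.length := by omega
      set t := L.length - (d+1) with hts
      have hts' : L.length - d = t + 1 := by omega
      rw [hts'] at ih1 ih2
      set g := L.getD t ∅ with hg
      have hgg : L.get ⟨t, htL⟩ = g := by
        rw [hg, List.getD_eq_getElem _ _ htL]
        rfl
      have hrev : (L.drop t).reverse = (L.drop (t+1)).reverse ++ [g] := by
        rw [List.drop_eq_getElem_cons htL, List.reverse_cons, hg,
          List.getD_eq_getElem _ _ htL]
      have hcorner : IsCornerOf
          (Finset.univ \ (l ++ (L.drop (t+1)).reverse).toFinset) g := by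
        rw [ih2, ← hgg]
        exact hLpeel t htL
      have hgnot : g ∉ (L.take t).toFinset := by
        intro hmem
        rw [Stmt7Aux.mem_take_iff] at hmem
        obtain ⟨i, h1, h2, he⟩ := hmem
        exact Stmt7Aux.getD_ne_of_nodup hLnd h2 htL (Nat.ne_of_lt h1) he
      constructor
      · rw [hrev, ← List.append_assoc]
        exact Stmt7Aux.append_corner _ ih1 _ hcorner
      · rw [hrev, ← List.append_assoc, List.toFinset_append (l := l ++ (L.drop (t+1)).reverse)]
        have hsing : ([g] : List (Finset (Fin n))).toFinset = {g} := by simp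
        rw [hsing]
        have : (l ++ (L.drop (t+1)).reverse).toFinset ∪ {g}
            = insert g (l ++ (L.drop (t+1)).reverse).toFinset := by
          ext u; simp
        rw [this, Stmt7Aux.compl_insert, ih2, Stmt7Aux.take_succ_toFinset htL, ← hg,
          Finset.erase_insert hgnot]
  obtain ⟨hshell, _⟩ := main L.length (le_refl _)
  rw [Nat.sub_self, List.drop_zero] at hshell
  refine ⟨l ++ L.reverse, ⟨L.reverse, rfl⟩, hshell, ?_⟩
  rw [List.length_append, List.length_reverse]
  have h1 : l.toFinset.card = l.length := List.toFinset_card_of_nodup hnd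
  have h2 : L.toFinset.card = L.length := List.toFinset_card_of_nodup hLnd
  have h3 : (Finset.univ \ l.toFinset).card
      = (Finset.univ : Finset (Finset (Fin n))).card - l.toFinset.card :=
    Finset.card_sdiff_of_subset (Finset.subset_univ _)
  have h4 : (Finset.univ : Finset (Finset (Fin n))).card = 2 ^ n := by
    rw [Finset.card_univ, Fintype.card_finset, Fintype.card_fin]
  have h5 : l.toFinset.card ≤ (Finset.univ : Finset (Finset (Fin n))).card :=
    Finset.card_le_univ _
  rw [hLfin] at h2
  omega
end
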